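/- arXiv:2412.03852 — 3 statements merged into one kernel-verified Lean document; each statement's English description precedes it below -/
import Mathlib

section
/- Let {A(n)}_{n≥1} be a bounded sequence in a Hilbert space ℋ and let 𝒫 be a set of primes of positive relative density within the primes. If for all distinct p, q ∈ 𝒫 one has lim_{N→∞} (1/N)∑_{n=1}^N ⟨A(pn), A(qn)⟩ = 0, then lim_{N→∞} ‖(1/N)∑_{n=1}^N A(n)‖ = 0. -/
open MeasureTheory Filter Topology
open scoped Classical

lemma counting_abel (S : ℕ → Prop) [DecidablePred S] (N : ℕ) :
    ∑ k ∈ (Finset.Icc 1 N).filter S, (k : ℝ)⁻¹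
      = (∑ n ∈ Finset.Icc 1 N,
          (((Finset.Icc 1 n).filter S).card : ℝ) * ((n : ℝ)⁻¹ - ((n : ℝ) + 1)⁻¹))
        + (((Finset.Icc 1 N).filter S).card : ℝ) * ((N : ℝ) + 1)⁻¹ := by
  induction N with
  | zero => simp
  | succ N ih =>
    have hins : Finset.Icc 1 (N + 1) = insert (N + 1) (Finset.Icc 1 N) := by
      ext x; simp only [Finset.mem_Icc, Finset.mem_insert]; omega
    have hnot : (N + 1) ∉ Finset.Icc 1 N := by simp
    have hnot' : (N + 1) ∉ (Finset.Icc 1 N).filter S := by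
      simp [Finset.mem_filter]
    have hsum1 : ∑ n ∈ Finset.Icc 1 (N+1),
        (((Finset.Icc 1 n).filter S).card : ℝ) * ((n : ℝ)⁻¹ - ((n : ℝ) + 1)⁻¹)
        = (∑ n ∈ Finset.Icc 1 N,
          (((Finset.Icc 1 n).filter S).card : ℝ) * ((n : ℝ)⁻¹ - ((n : ℝ) + 1)⁻¹))
          + (((Finset.Icc 1 (N+1)).filter S).card : ℝ)
            * (((N:ℝ)+1)⁻¹ - ((N : ℝ) + 1 + 1)⁻¹) := by
      rw [hins, Finset.sum_insert hnot, ← hins]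
      simp only [Nat.cast_add, Nat.cast_one]
      ring
    by_cases hS : S (N + 1)
    · have hfil : (Finset.Icc 1 (N+1)).filter S
          = insert (N+1) ((Finset.Icc 1 N).filter S) := by
        rw [hins, Finset.filter_insert, if_pos hS]
      have hcard : (((Finset.Icc 1 (N+1)).filter S).card : ℝ)
          = (((Finset.Icc 1 N).filter S).card : ℝ) + 1 := by
        rw [hfil, Finset.card_insert_of_notMem hnot']; push_cast; ring
      rw [hfil, Finset.sum_insert hnot', hsum1, hcard, ih]
      rw [Finset.card_insert_of_notMem hnot']
      have h1 : ((N:ℝ) + 1) ≠ 0 := by positivity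
      have h2 : ((N:ℝ) + 1 + 1) ≠ 0 := by positivity
      simp only [Nat.cast_add, Nat.cast_one]
      field_simp
      ring
    · have hfil : (Finset.Icc 1 (N+1)).filter S
          = (Finset.Icc 1 N).filter S := by
        rw [hins, Finset.filter_insert, if_neg hS]
      rw [hfil, hsum1, hfil, ih]
      simp only [Nat.cast_add, Nat.cast_one]
      ring

lemma primes_reciprocal_diverge :
    Tendsto (fun N => ∑ p ∈ (Finset.Icc 1 N).filter (fun k => Nat.Prime k), (p:ℝ)⁻¹)
      atTop atTop := by
  have h0 := not_summable_one_div_on_primes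
  have hf : ∀ n, 0 ≤ Set.indicator {p : ℕ | p.Prime} (fun n : ℕ => (1:ℝ)/n) n := by
    intro n
    exact Set.indicator_nonneg (fun x _ => by positivity) n
  have h1 := (not_summable_iff_tendsto_nat_atTop_of_nonneg hf).mp h0
  have key : ∀ N : ℕ, ∑ i ∈ Finset.range (N+1),
      Set.indicator {p : ℕ | p.Prime} (fun n : ℕ => (1:ℝ)/n) i
      = ∑ p ∈ (Finset.Icc 1 N).filter (fun k => Nat.Prime k), (p:ℝ)⁻¹ := by
    intro N
    rw [Finset.sum_indicator_eq_sum_filter]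
    apply Finset.sum_congr
    · ext x
      simp only [Finset.mem_filter, Finset.mem_range, Finset.mem_Icc, Set.mem_setOf_eq]
      constructor
      · rintro ⟨hx, hp⟩; exact ⟨⟨hp.one_lt.le, by omega⟩, hp⟩
      · rintro ⟨⟨h1x, h2x⟩, hp⟩; exact ⟨by omega, hp⟩
    · intro x _; rw [one_div]
  have h2 : Tendsto (fun N : ℕ => ∑ i ∈ Finset.range (N+1),
      Set.indicator {p : ℕ | p.Prime} (fun n : ℕ => (1:ℝ)/n) i) atTop atTop :=
    h1.comp (tendsto_add_atTop_nat 1)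
  simpa only [key] using h2

lemma exists_big_Q (PP : Set ℕ) (δ : ℝ) (hδ : 0 < δ)
    (hdens : Tendsto
      (fun N : ℕ =>
        (((Finset.Icc 1 N).filter (· ∈ PP)).card : ℝ) /
          (((Finset.Icc 1 N).filter Nat.Prime).card : ℝ))
      atTop (nhds δ)) (b : ℝ) :
    ∃ Q : Finset ℕ, (↑Q : Set ℕ) ⊆ PP ∧ b ≤ ∑ p ∈ Q, (p:ℝ)⁻¹ := by
  have hpc_pos : ∀ n : ℕ, 2 ≤ n →
      (0:ℝ) < (((Finset.Icc 1 n).filter Nat.Prime).card : ℝ) := by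
    intro n hn
    have h2 : 2 ∈ (Finset.Icc 1 n).filter Nat.Prime := by
      simp [Finset.mem_Icc, Nat.prime_two]; omega
    exact_mod_cast Finset.card_pos.mpr ⟨2, h2⟩
  have hev : ∀ᶠ n : ℕ in atTop,
      δ/2 * (((Finset.Icc 1 n).filter Nat.Prime).card : ℝ)
        ≤ (((Finset.Icc 1 n).filter (fun k => k ∈ PP)).card : ℝ) := by
    have h1 : ∀ᶠ n : ℕ in atTop, δ/2 <
        (((Finset.Icc 1 n).filter (fun k => k ∈ PP)).card : ℝ) /
          (((Finset.Icc 1 n).filter Nat.Prime).card : ℝ) := by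
      have := hdens.eventually (eventually_gt_nhds (by linarith : δ/2 < δ))
      simpa using this
    filter_upwards [h1, eventually_ge_atTop 2] with n hn h2
    have hp := hpc_pos n h2
    rw [lt_div_iff₀ hp] at hn
    linarith
  obtain ⟨N₀', hN₀'⟩ := eventually_atTop.mp hev
  set N₀ := max N₀' 2 with hN₀def
  set c₀ : ℝ := ∑ n ∈ Finset.Icc 1 (N₀ - 1),
      (((Finset.Icc 1 n).filter Nat.Prime).card : ℝ)
        * ((n : ℝ)⁻¹ - ((n : ℝ) + 1)⁻¹) with hc₀
  have hbig : ∀ᶠ N : ℕ in atTop,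
      2*b/δ + 1 + c₀ ≤ ∑ p ∈ (Finset.Icc 1 N).filter Nat.Prime, (p:ℝ)⁻¹ :=
    primes_reciprocal_diverge.eventually_ge_atTop _
  obtain ⟨N, hNb, hNN₀⟩ := ((hbig.and (eventually_ge_atTop N₀)).exists)
  refine ⟨(Finset.Icc 1 N).filter (fun k => k ∈ PP), ?_, ?_⟩
  · intro x hx
    simp only [Finset.coe_filter, Set.mem_setOf_eq, Finset.mem_coe] at hx
    exact hx.2
  have habelP := counting_abel (fun k => k ∈ PP) N
  have habelπ := counting_abel Nat.Prime N
  have hΔ : ∀ n : ℕ, 1 ≤ n → (0:ℝ) ≤ (n : ℝ)⁻¹ - ((n : ℝ) + 1)⁻¹ := by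
    intro n hn
    have h1 : (0:ℝ) < (n:ℝ) := by exact_mod_cast hn
    have : ((n:ℝ)+1)⁻¹ ≤ (n:ℝ)⁻¹ := by
      apply inv_anti₀ h1; linarith
    linarith
  have hsplit : ∀ g : ℕ → ℝ,
      ∑ n ∈ Finset.Icc 1 N, g n
        = ∑ n ∈ Finset.Icc 1 (N₀-1), g n + ∑ n ∈ Finset.Ioc (N₀-1) N, g n := by
    intro g
    have e1 : Finset.Icc 1 N = Finset.Ioc 0 N := by ext x; simp; omega
    have e2 : Finset.Icc 1 (N₀-1) = Finset.Ioc 0 (N₀-1) := by ext x; simp; omega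
    rw [e1, e2, Finset.sum_Ioc_consecutive g (Nat.zero_le _) (by omega : N₀ - 1 ≤ N)]
  have hπN : (((Finset.Icc 1 N).filter Nat.Prime).card : ℝ) * ((N:ℝ)+1)⁻¹ ≤ 1 := by
    have hcard : (((Finset.Icc 1 N).filter Nat.Prime).card : ℝ) ≤ (N:ℝ) := by
      have h1 := Finset.card_filter_le (Finset.Icc 1 N) Nat.Prime
      have h2 : (Finset.Icc 1 N).card = N := by rw [Nat.card_Icc]; omega
      exact_mod_cast h1.trans_eq h2
    have hpos : (0:ℝ) < (N:ℝ)+1 := by positivity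
    rw [← div_eq_mul_inv, div_le_one hpos]
    linarith
  have hπN0 : (0:ℝ) ≤ (((Finset.Icc 1 N).filter Nat.Prime).card : ℝ) * ((N:ℝ)+1)⁻¹ :=
    mul_nonneg (Nat.cast_nonneg _) (by positivity)
  have hπsplit : ∑ n ∈ Finset.Icc 1 N,
        (((Finset.Icc 1 n).filter Nat.Prime).card : ℝ) * ((n : ℝ)⁻¹ - ((n : ℝ) + 1)⁻¹)
      = (∑ n ∈ Finset.Icc 1 (N₀-1),
        (((Finset.Icc 1 n).filter Nat.Prime).card : ℝ) * ((n : ℝ)⁻¹ - ((n : ℝ) + 1)⁻¹))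
      + ∑ n ∈ Finset.Ioc (N₀-1) N,
        (((Finset.Icc 1 n).filter Nat.Prime).card : ℝ) * ((n : ℝ)⁻¹ - ((n : ℝ) + 1)⁻¹) :=
    hsplit _
  have hXlow : (∑ p ∈ (Finset.Icc 1 N).filter Nat.Prime, (p:ℝ)⁻¹) - 1 - c₀
      ≤ ∑ n ∈ Finset.Ioc (N₀-1) N,
        (((Finset.Icc 1 n).filter Nat.Prime).card : ℝ)
          * ((n : ℝ)⁻¹ - ((n : ℝ) + 1)⁻¹) := by
    rw [hc₀, habelπ, hπsplit]
    linarith [hπN]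
  have hstep1 : (δ/2) * (∑ n ∈ Finset.Ioc (N₀-1) N,
        (((Finset.Icc 1 n).filter Nat.Prime).card : ℝ)
          * ((n : ℝ)⁻¹ - ((n : ℝ) + 1)⁻¹))
      ≤ ∑ n ∈ Finset.Ioc (N₀-1) N,
      (((Finset.Icc 1 n).filter (fun k => k ∈ PP)).card : ℝ)
        * ((n : ℝ)⁻¹ - ((n : ℝ) + 1)⁻¹) := by
    rw [Finset.mul_sum]
    apply Finset.sum_le_sum
    intro n hn
    rw [Finset.mem_Ioc] at hn
    have hn₀ : N₀ ≤ n := by omega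
    have h1n : 1 ≤ n := by omega
    have hP := hN₀' n (le_trans (le_max_left _ _) hn₀)
    have hd := hΔ n h1n
    rw [← mul_assoc]
    exact mul_le_mul_of_nonneg_right hP hd
  have hheads : (0:ℝ) ≤ ∑ n ∈ Finset.Icc 1 (N₀-1),
      (((Finset.Icc 1 n).filter (fun k => k ∈ PP)).card : ℝ)
        * ((n : ℝ)⁻¹ - ((n : ℝ) + 1)⁻¹) := by
    apply Finset.sum_nonneg
    intro n hn
    rw [Finset.mem_Icc] at hn
    exact mul_nonneg (Nat.cast_nonneg _) (hΔ n hn.1)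
  have hPsplit : ∑ n ∈ Finset.Icc 1 N,
        (((Finset.Icc 1 n).filter (fun k => k ∈ PP)).card : ℝ) * ((n : ℝ)⁻¹ - ((n : ℝ) + 1)⁻¹)
      = (∑ n ∈ Finset.Icc 1 (N₀-1),
        (((Finset.Icc 1 n).filter (fun k => k ∈ PP)).card : ℝ) * ((n : ℝ)⁻¹ - ((n : ℝ) + 1)⁻¹))
      + ∑ n ∈ Finset.Ioc (N₀-1) N,
        (((Finset.Icc 1 n).filter (fun k => k ∈ PP)).card : ℝ) * ((n : ℝ)⁻¹ - ((n : ℝ) + 1)⁻¹) :=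
    hsplit _
  have hδ2 : (0:ℝ) ≤ δ/2 := by linarith
  have hb2 : b ≤ (δ/2) * ((∑ p ∈ (Finset.Icc 1 N).filter Nat.Prime, (p:ℝ)⁻¹)
      - 1 - c₀) := by
    have h1 : 2*b/δ ≤ (∑ p ∈ (Finset.Icc 1 N).filter Nat.Prime, (p:ℝ)⁻¹)
        - 1 - c₀ := by linarith
    have h2 := mul_le_mul_of_nonneg_left h1 hδ2
    have h3 : (δ/2) * (2*b/δ) = b := by field_simp
    linarith
  have hPc0 : (0:ℝ) ≤ (((Finset.Icc 1 N).filter (fun k => k ∈ PP)).card : ℝ) * ((N:ℝ)+1)⁻¹ :=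
    mul_nonneg (Nat.cast_nonneg _) (by positivity)
  rw [habelP, hPsplit]
  have h4 := mul_le_mul_of_nonneg_left hXlow hδ2
  linarith

lemma le_of_sq_le_sq'' (a b : ℝ) (ha : 0 ≤ a) (hb : 0 ≤ b) (h : a^2 ≤ b^2) : a ≤ b := by
  nlinarith

lemma cs_abs (s : Finset ℕ) (f : ℕ → ℝ) :
    ∑ i ∈ s, |f i| ≤ Real.sqrt s.card * Real.sqrt (∑ i ∈ s, (f i)^2) := by
  have h := Real.sum_mul_le_sqrt_mul_sqrt s (fun _ => (1:ℝ)) (fun i => |f i|)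
  simp only [one_mul, one_pow, sq_abs] at h
  simpa [Finset.sum_const] using h

lemma card_dvd_Icc (N d : ℕ) :
    ((Finset.Icc 1 N).filter (fun n => d ∣ n)).card = N / d := by
  have h : Finset.Icc 1 N = Finset.Ioc 0 N := by ext x; simp; omega
  rw [h]
  exact Nat.Ioc_filter_dvd_card_eq_div N d

lemma cast_div_le' (N p : ℕ) : ((N/p : ℕ):ℝ) ≤ (N:ℝ) * (p:ℝ)⁻¹ := by
  rcases Nat.eq_zero_or_pos p with hp | hp
  · subst hp; simp
  · have := Nat.cast_div_le (α := ℝ) (m := N) (n := p)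
    rwa [div_eq_mul_inv] at this

lemma cast_div_ge (N p : ℕ) (hp : 0 < p) : (N:ℝ) * (p:ℝ)⁻¹ - 1 ≤ ((N/p : ℕ):ℝ) := by
  have hpR : (0:ℝ) < (p:ℝ) := by exact_mod_cast hp
  have h1 : (N:ℝ) < (p:ℝ) * ((N/p:ℕ):ℝ) + (p:ℝ) := by
    have : N < p * (N/p) + p := by
      have := Nat.div_add_mod N p
      have := Nat.mod_lt N hp
      omega
    exact_mod_cast this
  have h2 : (N:ℝ) * (p:ℝ)⁻¹ < ((N/p:ℕ):ℝ) + 1 := by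
    rw [mul_inv_lt_iff₀ hpR]
    nlinarith
  linarith

lemma swap_pm {E : Type*} [AddCommMonoid E] (Q : Finset ℕ) (hQ2 : ∀ p ∈ Q, 2 ≤ p) (N : ℕ)
    (f : ℕ → ℕ → E) :
    ∑ p ∈ Q, ∑ m ∈ Finset.Icc 1 (N/p), f p m
      = ∑ m ∈ Finset.Icc 1 (N/2), ∑ p ∈ Q.filter (fun p => p*m ≤ N), f p m := by
  apply Finset.sum_comm'
  intro p m
  simp only [Finset.mem_Icc, Finset.mem_filter]
  constructor
  · rintro ⟨hp, h1, h2⟩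
    have hp2 := hQ2 p hp
    have hpm : p * m ≤ N := by
      have h3 := (Nat.le_div_iff_mul_le (by omega : 0 < p)).mp h2
      rw [Nat.mul_comm] at h3; exact h3
    have h2m : 2 * m ≤ N := le_trans (Nat.mul_le_mul_right m hp2) hpm
    exact ⟨⟨hp, hpm⟩, h1, (Nat.le_div_iff_mul_le (by norm_num)).mpr (by omega)⟩
  · rintro ⟨⟨hp, hpm⟩, h1, _⟩
    have hp2 := hQ2 p hp
    refine ⟨hp, h1, (Nat.le_div_iff_mul_le (by omega : 0 < p)).mpr ?_⟩
    rw [Nat.mul_comm]; exact hpm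

lemma dvd_reindex {E : Type*} [AddCommMonoid E] (p N : ℕ) (hp : 0 < p) (g : ℕ → E) :
    ∑ n ∈ (Finset.Icc 1 N).filter (fun n => p ∣ n), g n
      = ∑ m ∈ Finset.Icc 1 (N/p), g (p*m) := by
  refine Finset.sum_bij' (fun n _ => n / p) (fun m _ => p * m) ?_ ?_ ?_ ?_ ?_
  · intro n hn
    simp only [Finset.mem_filter, Finset.mem_Icc] at hn
    obtain ⟨⟨h1, h2⟩, hd⟩ := hn
    simp only [Finset.mem_Icc]
    constructor
    · rw [Nat.one_le_div_iff hp]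
      exact Nat.le_of_dvd (by omega) hd
    · exact Nat.div_le_div_right h2
  · intro m hm
    simp only [Finset.mem_Icc] at hm
    obtain ⟨h1, h2⟩ := hm
    simp only [Finset.mem_filter, Finset.mem_Icc]
    have hpm : p * m ≤ N := by
      have h3 := (Nat.le_div_iff_mul_le hp).mp h2
      rw [Nat.mul_comm] at h3; exact h3
    exact ⟨⟨Nat.mul_pos hp h1, hpm⟩, ⟨m, rfl⟩⟩
  · intro n hn
    simp only [Finset.mem_filter] at hn
    exact Nat.mul_div_cancel' hn.2
  · intro m hm
    exact Nat.mul_div_cancel_left m hp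
  · intro n hn
    simp only [Finset.mem_filter] at hn
    rw [Nat.mul_div_cancel' hn.2]

set_option maxHeartbeats 1000000 in
theorem stmt2 {H : Type*} [NormedAddCommGroup H] [InnerProductSpace ℂ H] [CompleteSpace H]
    (A : ℕ → H) (C : ℝ) (hbdd : ∀ n, ‖A n‖ ≤ C)
    (PP : Set ℕ) (hPP : ∀ p ∈ PP, Nat.Prime p)
    (δ : ℝ) (hδ : 0 < δ)
    (hdens : Tendsto
      (fun N : ℕ =>
        (((Finset.Icc 1 N).filter (· ∈ PP)).card : ℝ) /
          (((Finset.Icc 1 N).filter Nat.Prime).card : ℝ))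
      atTop (nhds δ))
    (horth : ∀ p ∈ PP, ∀ q ∈ PP, p ≠ q →
      Tendsto (fun N : ℕ => (N : ℂ)⁻¹ * ∑ n ∈ Finset.Icc 1 N,
        (inner ℂ (A (p * n)) (A (q * n)) : ℂ)) atTop (nhds 0)) :
    Tendsto (fun N : ℕ => ‖(N : ℂ)⁻¹ • ∑ n ∈ Finset.Icc 1 N, A n‖) atTop (nhds 0) := by
  rw [NormedAddCommGroup.tendsto_nhds_zero]
  intro ε hε
  simp only [norm_norm]
  -- constants
  have hC0 : (0:ℝ) ≤ C := le_trans (norm_nonneg _) (hbdd 0)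
  set D : ℝ := C + 1 with hDdef
  have hD1 : (1:ℝ) ≤ D := by simp [hDdef]; linarith
  have hD0 : (0:ℝ) < D := by linarith
  have hbddD : ∀ n, ‖A n‖ ≤ D := fun n => le_trans (hbdd n) (by simp [hDdef])
  obtain ⟨Q, hQsub, hQL⟩ := exists_big_Q PP δ hδ hdens (max 1 (16*D^2/ε^2))
  set L : ℝ := ∑ p ∈ Q, (p:ℝ)⁻¹ with hLdef
  have hL1 : (1:ℝ) ≤ L := le_trans (le_max_left _ _) hQL
  have hL0 : (0:ℝ) < L := by linarith
  have hLD : 16*D^2/ε^2 ≤ L := le_trans (le_max_right _ _) hQL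
  have hQprime : ∀ p ∈ Q, Nat.Prime p := fun p hp => hPP p (hQsub hp)
  have hQ2 : ∀ p ∈ Q, 2 ≤ p := fun p hp => (hQprime p hp).two_le
  have hkey : 16 * D^2 ≤ ε^2 * L := by
    have h := (div_le_iff₀ (by positivity : (0:ℝ) < ε^2)).mp hLD
    linarith
  -- the weight function
  set ω : ℕ → ℝ := fun n => ∑ p ∈ Q, if p ∣ n then (1:ℝ) else 0 with hω
  -- first moment
  have hsum_ω : ∀ N : ℕ, ∑ n ∈ Finset.Icc 1 N, ω n = ∑ p ∈ Q, ((N/p : ℕ) : ℝ) := by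
    intro N
    rw [hω, Finset.sum_comm]
    apply Finset.sum_congr rfl
    intro p _
    rw [Finset.sum_boole, card_dvd_Icc]
  have hsum_ω_le : ∀ N : ℕ, ∑ n ∈ Finset.Icc 1 N, ω n ≤ (N:ℝ) * L := by
    intro N
    rw [hsum_ω, hLdef, Finset.mul_sum]
    exact Finset.sum_le_sum (fun p _ => cast_div_le' N p)
  have hsum_ω_ge : ∀ N : ℕ, (N:ℝ) * L - Q.card ≤ ∑ n ∈ Finset.Icc 1 N, ω n := by
    intro N
    rw [hsum_ω, hLdef, Finset.mul_sum]
    have h : ∑ p ∈ Q, ((N:ℝ)*(p:ℝ)⁻¹ - 1) ≤ ∑ p ∈ Q, ((N/p:ℕ):ℝ) :=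
      Finset.sum_le_sum (fun p hp => cast_div_ge N p (by have := hQ2 p hp; omega))
    rw [Finset.sum_sub_distrib, Finset.sum_const] at h
    simpa using h
  -- second moment
  have hsum_ω2 : ∀ N : ℕ, ∑ n ∈ Finset.Icc 1 N, (ω n)^2 ≤ (N:ℝ)*L + (N:ℝ)*L^2 := by
    intro N
    have hexp : ∑ n ∈ Finset.Icc 1 N, (ω n)^2
        = ∑ p ∈ Q, ∑ q ∈ Q, (((Finset.Icc 1 N).filter (fun n => p ∣ n ∧ q ∣ n)).card : ℝ) := by
      have h1 : ∀ n, (ω n)^2 = ∑ p ∈ Q, ∑ q ∈ Q, (if p ∣ n ∧ q ∣ n then (1:ℝ) else 0) := by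
        intro n
        rw [hω]
        simp only [sq, Finset.sum_mul_sum]
        apply Finset.sum_congr rfl; intro p _
        apply Finset.sum_congr rfl; intro q _
        by_cases h1 : p ∣ n <;> by_cases h2 : q ∣ n <;> simp [h1, h2]
      simp only [h1]
      rw [Finset.sum_comm]
      apply Finset.sum_congr rfl
      intro p _
      rw [Finset.sum_comm]
      apply Finset.sum_congr rfl
      intro q _
      rw [Finset.sum_boole]
    rw [hexp]
    have hbound : ∀ p ∈ Q, ∑ q ∈ Q, (((Finset.Icc 1 N).filter (fun n => p ∣ n ∧ q ∣ n)).card : ℝ)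
        ≤ (N:ℝ) * (p:ℝ)⁻¹ + (N:ℝ) * (p:ℝ)⁻¹ * L := by
      intro p hp
      rw [← Finset.add_sum_erase Q _ hp]
      have hdiag : (((Finset.Icc 1 N).filter (fun n => p ∣ n ∧ p ∣ n)).card : ℝ)
          ≤ (N:ℝ) * (p:ℝ)⁻¹ := by
        have he : (Finset.Icc 1 N).filter (fun n => p ∣ n ∧ p ∣ n)
            = (Finset.Icc 1 N).filter (fun n => p ∣ n) := by
          apply Finset.filter_congr; intro n _; simp
        rw [he, card_dvd_Icc]
        exact cast_div_le' N p
      have hoff : ∑ q ∈ Q.erase p,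
          (((Finset.Icc 1 N).filter (fun n => p ∣ n ∧ q ∣ n)).card : ℝ)
          ≤ (N:ℝ) * (p:ℝ)⁻¹ * L := by
        have hterm : ∀ q ∈ Q.erase p,
            (((Finset.Icc 1 N).filter (fun n => p ∣ n ∧ q ∣ n)).card : ℝ)
            ≤ (N:ℝ) * (p:ℝ)⁻¹ * (q:ℝ)⁻¹ := by
          intro q hq
          rw [Finset.mem_erase] at hq
          have hqQ := hq.2
          have hne : q ≠ p := hq.1
          have hcop : Nat.Coprime p q :=
            (Nat.coprime_primes (hQprime p hp) (hQprime q hqQ)).mpr (Ne.symm hne)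
          have he : (Finset.Icc 1 N).filter (fun n => p ∣ n ∧ q ∣ n)
              = (Finset.Icc 1 N).filter (fun n => p * q ∣ n) := by
            apply Finset.filter_congr; intro n _
            constructor
            · rintro ⟨h1, h2⟩; exact hcop.mul_dvd_of_dvd_of_dvd h1 h2
            · intro h; exact ⟨dvd_trans (dvd_mul_right p q) h, dvd_trans (dvd_mul_left q p) h⟩
          rw [he, card_dvd_Icc]
          calc ((N/(p*q) : ℕ):ℝ) ≤ (N:ℝ) * ((p*q : ℕ):ℝ)⁻¹ := cast_div_le' N (p*q)
            _ = (N:ℝ) * (p:ℝ)⁻¹ * (q:ℝ)⁻¹ := by push_cast; ring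
        calc ∑ q ∈ Q.erase p, (((Finset.Icc 1 N).filter (fun n => p ∣ n ∧ q ∣ n)).card : ℝ)
            ≤ ∑ q ∈ Q.erase p, (N:ℝ) * (p:ℝ)⁻¹ * (q:ℝ)⁻¹ := Finset.sum_le_sum hterm
          _ ≤ ∑ q ∈ Q, (N:ℝ) * (p:ℝ)⁻¹ * (q:ℝ)⁻¹ := by
              apply Finset.sum_le_sum_of_subset_of_nonneg (Finset.erase_subset p Q)
              intro q _ _; positivity
          _ = (N:ℝ) * (p:ℝ)⁻¹ * L := by rw [hLdef, ← Finset.mul_sum]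
      linarith
    calc ∑ p ∈ Q, ∑ q ∈ Q, (((Finset.Icc 1 N).filter (fun n => p ∣ n ∧ q ∣ n)).card : ℝ)
        ≤ ∑ p ∈ Q, ((N:ℝ) * (p:ℝ)⁻¹ + (N:ℝ) * (p:ℝ)⁻¹ * L) := Finset.sum_le_sum hbound
      _ = (∑ p ∈ Q, (N:ℝ)*(p:ℝ)⁻¹) + (∑ p ∈ Q, (N:ℝ)*(p:ℝ)⁻¹)*L := by
          rw [Finset.sum_add_distrib, ← Finset.sum_mul]
      _ = (N:ℝ)*L + (N:ℝ)*L^2 := by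
          rw [← Finset.mul_sum, ← hLdef]; ring
  -- variance
  have hvar : ∀ N : ℕ, ∑ n ∈ Finset.Icc 1 N, (ω n - L)^2 ≤ (N:ℝ)*L + 2*L*Q.card := by
    intro N
    have hexp : ∑ n ∈ Finset.Icc 1 N, (ω n - L)^2
        = (∑ n ∈ Finset.Icc 1 N, (ω n)^2) - 2*L*(∑ n ∈ Finset.Icc 1 N, ω n) + (N:ℝ)*L^2 := by
      have h1 : ∀ n, (ω n - L)^2 = (ω n)^2 - 2*L*(ω n) + L^2 := fun n => by ring
      simp_rw [h1]
      rw [Finset.sum_add_distrib, Finset.sum_sub_distrib, ← Finset.mul_sum, Finset.sum_const,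
        Nat.card_Icc]
      simp only [Nat.add_sub_cancel, nsmul_eq_mul]
    rw [hexp]
    have h1 := hsum_ω2 N
    have h2 := hsum_ω_ge N
    have h3 := mul_le_mul_of_nonneg_left h2 (by linarith : (0:ℝ) ≤ 2*L)
    linarith
  -- the remainder term
  set R : ℕ → H := fun N => ∑ n ∈ Finset.Icc 1 N, (((L - ω n : ℝ) : ℂ)) • A n with hRdef
  have hRbound : ∀ N : ℕ, 2*Q.card ≤ N →
      ‖R N‖ ≤ D * (Real.sqrt N * Real.sqrt (2*(N:ℝ)*L)) := by
    intro N hN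
    have h1 : ‖R N‖ ≤ ∑ n ∈ Finset.Icc 1 N, |L - ω n| * D := by
      refine le_trans (norm_sum_le _ _) (Finset.sum_le_sum ?_)
      intro n _
      rw [norm_smul, Complex.norm_real, Real.norm_eq_abs]
      exact mul_le_mul_of_nonneg_left (hbddD n) (abs_nonneg _)
    have h2 : ∑ n ∈ Finset.Icc 1 N, |L - ω n| ≤ Real.sqrt N * Real.sqrt (2*(N:ℝ)*L) := by
      have h3 := cs_abs (Finset.Icc 1 N) (fun n => L - ω n)
      rw [Nat.card_Icc] at h3
      simp only [Nat.add_sub_cancel] at h3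
      have h4 : ∑ n ∈ Finset.Icc 1 N, (L - ω n)^2 ≤ 2*(N:ℝ)*L := by
        have h5 := hvar N
        have h6 : ∀ n, (L - ω n)^2 = (ω n - L)^2 := fun n => by ring
        simp_rw [h6]
        have h7 : (2*(Q.card:ℝ)) ≤ (N:ℝ) := by exact_mod_cast hN
        have h8 := mul_le_mul_of_nonneg_right h7 (le_of_lt hL0)
        linarith
      calc ∑ n ∈ Finset.Icc 1 N, |L - ω n|
          ≤ Real.sqrt N * Real.sqrt (∑ n ∈ Finset.Icc 1 N, (L - ω n)^2) := h3
        _ ≤ Real.sqrt N * Real.sqrt (2*(N:ℝ)*L) := by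
            apply mul_le_mul_of_nonneg_left (Real.sqrt_le_sqrt h4) (Real.sqrt_nonneg _)
    calc ‖R N‖ ≤ ∑ n ∈ Finset.Icc 1 N, |L - ω n| * D := h1
      _ = D * ∑ n ∈ Finset.Icc 1 N, |L - ω n| := by rw [Finset.mul_sum]; congr 1; ext n; ring
      _ ≤ D * (Real.sqrt N * Real.sqrt (2*(N:ℝ)*L)) :=
          mul_le_mul_of_nonneg_left h2 (le_of_lt hD0)
  have hRfinal : ∀ N : ℕ, 1 ≤ N → 2*Q.card ≤ N → ((N:ℝ)*L)⁻¹ * ‖R N‖ ≤ ε/2 := by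
    intro N h1N hQN
    have hNpos : (0:ℝ) < N := by exact_mod_cast h1N
    have h1 : ((N:ℝ)*L)⁻¹ * ‖R N‖
        ≤ ((N:ℝ)*L)⁻¹ * (D * (Real.sqrt N * Real.sqrt (2*(N:ℝ)*L))) :=
      mul_le_mul_of_nonneg_left (hRbound N hQN) (by positivity)
    have h2 : (((N:ℝ)*L)⁻¹ * (D * (Real.sqrt N * Real.sqrt (2*(N:ℝ)*L))))^2
        = (((N:ℝ)*L)⁻¹)^2 * D^2 * ((N:ℝ) * (2*(N:ℝ)*L)) := by
      rw [mul_pow, mul_pow, mul_pow, Real.sq_sqrt (by positivity), Real.sq_sqrt (by positivity)]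
      ring
    have h3 : (((N:ℝ)*L)⁻¹)^2 * D^2 * ((N:ℝ) * (2*(N:ℝ)*L)) = 2*D^2/L := by
      field_simp
    have h4 : 2*D^2/L ≤ (ε/2)^2 := by
      rw [div_le_iff₀ hL0]
      nlinarith [hkey, hD0]
    apply le_of_sq_le_sq'' _ _ (by positivity) (by positivity)
    calc (((N:ℝ)*L)⁻¹ * ‖R N‖)^2
        ≤ (((N:ℝ)*L)⁻¹ * (D * (Real.sqrt N * Real.sqrt (2*(N:ℝ)*L))))^2 := by
          apply pow_le_pow_left₀ (by positivity) h1
      _ = 2*D^2/L := by rw [h2, h3]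
      _ ≤ (ε/2)^2 := h4
  -- the main term
  set v : ℕ → ℕ → H := fun N m => ∑ p ∈ Q.filter (fun p => p*m ≤ N), A (p*m) with hvdef
  set W : ℕ → H := fun N => ∑ n ∈ Finset.Icc 1 N, (((ω n : ℝ)) : ℂ) • A n with hWdef
  have hWswap : ∀ N : ℕ, W N = ∑ m ∈ Finset.Icc 1 (N/2), v N m := by
    intro N
    have h1 : ∀ n, (((ω n : ℝ)) : ℂ) • A n = ∑ p ∈ Q, (if p ∣ n then A n else 0) := by
      intro n
      rw [hω]
      simp only []
      rw [Complex.ofReal_sum, Finset.sum_smul]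
      apply Finset.sum_congr rfl
      intro p _
      split_ifs with h <;> simp [h]
    calc W N = ∑ n ∈ Finset.Icc 1 N, ∑ p ∈ Q, (if p ∣ n then A n else 0) :=
          Finset.sum_congr rfl (fun n _ => h1 n)
      _ = ∑ p ∈ Q, ∑ n ∈ Finset.Icc 1 N, (if p ∣ n then A n else 0) := Finset.sum_comm
      _ = ∑ p ∈ Q, ∑ n ∈ (Finset.Icc 1 N).filter (fun n => p ∣ n), A n := by
          apply Finset.sum_congr rfl; intro p _; rw [Finset.sum_filter]
      _ = ∑ p ∈ Q, ∑ m ∈ Finset.Icc 1 (N/p), A (p*m) := by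
          apply Finset.sum_congr rfl; intro p hp
          exact dvd_reindex p N (by have := hQ2 p hp; omega) A
      _ = ∑ m ∈ Finset.Icc 1 (N/2), v N m := swap_pm Q hQ2 N (fun p m => A (p*m))
  -- correlation sums
  set σ : ℕ → ℕ → ℕ → ℂ := fun p q K => ∑ n ∈ Finset.Icc 1 K,
      (inner ℂ (A (p * n)) (A (q * n)) : ℂ) with hσdef
  -- inner product expansion
  have hinner_expand : ∀ N m, (inner ℂ (v N m) (v N m) : ℂ)
      = ∑ p ∈ Q.filter (fun p => p*m ≤ N), ∑ q ∈ Q.filter (fun q => q*m ≤ N),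
          (inner ℂ (A (p*m)) (A (q*m)) : ℂ) := by
    intro N m
    rw [hvdef]
    simp only []
    rw [sum_inner]
    apply Finset.sum_congr rfl
    intro p _
    rw [inner_sum]
  -- diagonal-offdiagonal split for a square double sum
  have hsplit_pq : ∀ (S : Finset ℕ) (F : ℕ → ℕ → ℂ),
      ∑ p ∈ S, ∑ q ∈ S, F p q
        = (∑ p ∈ S, F p p) + ∑ p ∈ S, ∑ q ∈ S.erase p, F p q := by
    intro S F
    rw [← Finset.sum_add_distrib]
    apply Finset.sum_congr rfl
    intro p hp
    exact (Finset.add_sum_erase S (F p) hp).symm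
  have herase_filter : ∀ (m N : ℕ) (p : ℕ),
      (Q.filter (fun q => q*m ≤ N)).erase p = (Q.erase p).filter (fun q => q*m ≤ N) := by
    intro m N p
    ext q
    simp only [Finset.mem_erase, Finset.mem_filter]
    tauto
  -- rearrangement of the off-diagonal part
  have hoff_eq : ∀ N : ℕ,
      ∑ m ∈ Finset.Icc 1 (N/2), ∑ p ∈ Q.filter (fun p => p*m ≤ N),
        ∑ q ∈ (Q.filter (fun q => q*m ≤ N)).erase p, (inner ℂ (A (p*m)) (A (q*m)) : ℂ)
      = ∑ p ∈ Q, ∑ q ∈ Q.erase p, σ p q (min (N/p) (N/q)) := by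
    intro N
    have step1 : ∀ m, ∑ p ∈ Q.filter (fun p => p*m ≤ N),
        ∑ q ∈ (Q.filter (fun q => q*m ≤ N)).erase p, (inner ℂ (A (p*m)) (A (q*m)) : ℂ)
        = ∑ p ∈ Q.filter (fun p => p*m ≤ N),
          ∑ q ∈ (Q.erase p).filter (fun q => q*m ≤ N), (inner ℂ (A (p*m)) (A (q*m)) : ℂ) := by
      intro m
      apply Finset.sum_congr rfl
      intro p _
      rw [herase_filter]
    simp only [step1]
    rw [← swap_pm Q hQ2 N (fun p m => ∑ q ∈ (Q.erase p).filter (fun q => q*m ≤ N),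
      (inner ℂ (A (p*m)) (A (q*m)) : ℂ))]
    apply Finset.sum_congr rfl
    intro p hp
    apply Finset.sum_comm'
    intro m q
    simp only [Finset.mem_Icc, Finset.mem_filter, Finset.mem_erase, Finset.mem_Icc, le_min_iff]
    constructor
    · rintro ⟨⟨h1, h2⟩, ⟨hqne, hqQ⟩, hqm⟩
      have hq2 := hQ2 q hqQ
      refine ⟨⟨h1, h2, ?_⟩, hqne, hqQ⟩
      apply (Nat.le_div_iff_mul_le (by omega : 0 < q)).mpr
      rw [Nat.mul_comm]; exact hqm
    · rintro ⟨⟨h1, h2, h3⟩, hqne, hqQ⟩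
      have hq2 := hQ2 q hqQ
      refine ⟨⟨h1, h2⟩, ⟨hqne, hqQ⟩, ?_⟩
      have h4 := (Nat.le_div_iff_mul_le (by omega : 0 < q)).mp h3
      rw [Nat.mul_comm] at h4; exact h4
  -- tendsto of each correlation term
  have hpair : ∀ p ∈ Q, ∀ q ∈ Q.erase p,
      Tendsto (fun N : ℕ => (N:ℝ)⁻¹ * ‖σ p q (min (N/p) (N/q))‖) atTop (nhds 0) := by
    intro p hp q hq
    rw [Finset.mem_erase] at hq
    have hqQ := hq.2
    have hne : p ≠ q := fun h => hq.1 h.symm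
    have hg := horth p (hQsub hp) q (hQsub hqQ) hne
    have hp2 := hQ2 p hp
    have hq2 := hQ2 q hqQ
    have hK : Tendsto (fun N : ℕ => min (N/p) (N/q)) atTop atTop := by
      rw [tendsto_atTop]
      intro b
      filter_upwards [eventually_ge_atTop (b*p + b*q)] with N hN
      have h1 : b ≤ N/p := (Nat.le_div_iff_mul_le (by omega : 0 < p)).mpr
        (le_trans (Nat.le_add_right _ _) hN)
      have h2 : b ≤ N/q := (Nat.le_div_iff_mul_le (by omega : 0 < q)).mpr
        (le_trans (Nat.le_add_left _ _) hN)
      exact le_min h1 h2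
    have hcomp : Tendsto (fun N : ℕ =>
        ‖(((min (N/p) (N/q) : ℕ) : ℂ))⁻¹ * σ p q (min (N/p) (N/q))‖) atTop (nhds 0) := by
      have h5 := (hg.comp hK).norm
      rw [norm_zero] at h5
      exact h5
    apply squeeze_zero (fun N => by positivity) ?_ hcomp
    intro N
    show (N:ℝ)⁻¹ * ‖σ p q (min (N/p) (N/q))‖
      ≤ ‖(((min (N/p) (N/q) : ℕ) : ℂ))⁻¹ * σ p q (min (N/p) (N/q))‖
    rw [norm_mul, norm_inv, Complex.norm_natCast]
    rcases Nat.eq_zero_or_pos (min (N/p) (N/q)) with h0 | hKpos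
    · rw [h0]
      have : σ p q 0 = 0 := by rw [hσdef]; simp
      rw [this]
      simp
    · have hKN : min (N/p) (N/q) ≤ N := le_trans (min_le_left _ _) (Nat.div_le_self N p)
      have hKR : (0:ℝ) < ((min (N/p) (N/q) : ℕ):ℝ) := by exact_mod_cast hKpos
      have hle : (N:ℝ)⁻¹ ≤ ((min (N/p) (N/q) : ℕ):ℝ)⁻¹ := by
        apply inv_anti₀ hKR
        exact_mod_cast hKN
      exact mul_le_mul_of_nonneg_right hle (norm_nonneg _)
  -- tendsto of the total off-diagonal
  have hofft : Tendsto (fun N : ℕ => ∑ p ∈ Q, ∑ q ∈ Q.erase p,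
      (N:ℝ)⁻¹ * ‖σ p q (min (N/p) (N/q))‖) atTop (nhds 0) := by
    have h := tendsto_finset_sum Q
      (fun p hp => tendsto_finset_sum (Q.erase p) (fun q hq => hpair p hp q hq))
    simpa using h
  have hoffto : Tendsto (fun N : ℕ =>
      (N:ℝ)⁻¹ * ‖∑ p ∈ Q, ∑ q ∈ Q.erase p, σ p q (min (N/p) (N/q))‖) atTop (nhds 0) := by
    apply squeeze_zero (fun N => by positivity) ?_ hofft
    intro N
    calc (N:ℝ)⁻¹ * ‖∑ p ∈ Q, ∑ q ∈ Q.erase p, σ p q (min (N/p) (N/q))‖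
        ≤ (N:ℝ)⁻¹ * ∑ p ∈ Q, ∑ q ∈ Q.erase p, ‖σ p q (min (N/p) (N/q))‖ := by
          apply mul_le_mul_of_nonneg_left ?_ (by positivity)
          refine le_trans (norm_sum_le _ _) (Finset.sum_le_sum ?_)
          intro p _
          exact norm_sum_le _ _
      _ = ∑ p ∈ Q, ∑ q ∈ Q.erase p, (N:ℝ)⁻¹ * ‖σ p q (min (N/p) (N/q))‖ := by
          rw [Finset.mul_sum]
          apply Finset.sum_congr rfl
          intro p _
          rw [Finset.mul_sum]
  have heventoff : ∀ᶠ N : ℕ in atTop,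
      ‖∑ p ∈ Q, ∑ q ∈ Q.erase p, σ p q (min (N/p) (N/q))‖ ≤ D^2 * L * N := by
    have hpos : (0:ℝ) < D^2*L := by positivity
    filter_upwards [hoffto.eventually (eventually_lt_nhds hpos), eventually_ge_atTop 1]
      with N hN h1N
    have hNpos : (0:ℝ) < (N:ℝ) := by exact_mod_cast h1N
    have h2 := mul_le_mul_of_nonneg_left (le_of_lt hN) (le_of_lt hNpos)
    rw [← mul_assoc, mul_inv_cancel₀ (ne_of_gt hNpos), one_mul] at h2
    nlinarith [h2]
  -- diagonal bound
  have hdiagbound : ∀ N : ℕ, ∑ m ∈ Finset.Icc 1 (N/2),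
      ∑ p ∈ Q.filter (fun p => p*m ≤ N), ‖A (p*m)‖^2 ≤ D^2 * ((N:ℝ)*L) := by
    intro N
    have hcount : ∑ m ∈ Finset.Icc 1 (N/2), ∑ p ∈ Q.filter (fun p => p*m ≤ N), (1:ℝ)
        = ∑ p ∈ Q, ((N/p:ℕ):ℝ) := by
      rw [← swap_pm Q hQ2 N (fun p m => (1:ℝ))]
      apply Finset.sum_congr rfl; intro p _
      rw [Finset.sum_const, Nat.card_Icc]
      simp
    have h1 : ∑ m ∈ Finset.Icc 1 (N/2), ∑ p ∈ Q.filter (fun p => p*m ≤ N), ‖A (p*m)‖^2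
        ≤ ∑ m ∈ Finset.Icc 1 (N/2), ∑ p ∈ Q.filter (fun p => p*m ≤ N), (D^2:ℝ) := by
      apply Finset.sum_le_sum; intro m _
      apply Finset.sum_le_sum; intro p _
      have h2 := hbddD (p*m)
      nlinarith [norm_nonneg (A (p*m))]
    have h3 : ∑ m ∈ Finset.Icc 1 (N/2), ∑ p ∈ Q.filter (fun p => p*m ≤ N), (D^2:ℝ)
        = D^2 * ∑ m ∈ Finset.Icc 1 (N/2), ∑ p ∈ Q.filter (fun p => p*m ≤ N), (1:ℝ) := by
      rw [Finset.mul_sum]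
      apply Finset.sum_congr rfl; intro m _
      rw [Finset.mul_sum]
      apply Finset.sum_congr rfl; intro p _
      ring
    have h4 : ∑ p ∈ Q, ((N/p:ℕ):ℝ) ≤ (N:ℝ)*L := by
      rw [hLdef, Finset.mul_sum]
      exact Finset.sum_le_sum (fun p _ => cast_div_le' N p)
    calc ∑ m ∈ Finset.Icc 1 (N/2), ∑ p ∈ Q.filter (fun p => p*m ≤ N), ‖A (p*m)‖^2
        ≤ ∑ m ∈ Finset.Icc 1 (N/2), ∑ p ∈ Q.filter (fun p => p*m ≤ N), (D^2:ℝ) := h1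
      _ = D^2 * ∑ m ∈ Finset.Icc 1 (N/2), ∑ p ∈ Q.filter (fun p => p*m ≤ N), (1:ℝ) := h3
      _ = D^2 * ∑ p ∈ Q, ((N/p:ℕ):ℝ) := by rw [hcount]
      _ ≤ D^2 * ((N:ℝ)*L) := mul_le_mul_of_nonneg_left h4 (by positivity)
  -- norm-square sum bound
  have hvnorm : ∀ N : ℕ,
      ‖∑ p ∈ Q, ∑ q ∈ Q.erase p, σ p q (min (N/p) (N/q))‖ ≤ D^2 * L * N →
      ∑ m ∈ Finset.Icc 1 (N/2), ‖v N m‖^2 ≤ 2*D^2*((N:ℝ)*L) := by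
    intro N hoffN
    have e1 : (∑ m ∈ Finset.Icc 1 (N/2), ‖v N m‖^2)
        = (∑ m ∈ Finset.Icc 1 (N/2), (inner ℂ (v N m) (v N m) : ℂ)).re := by
      rw [Complex.re_sum]
      apply Finset.sum_congr rfl; intro m _
      have h := inner_self_eq_norm_sq (𝕜 := ℂ) (E := H) (v N m)
      rw [RCLike.re_to_complex] at h
      exact h.symm
    have e2 : (∑ m ∈ Finset.Icc 1 (N/2), (inner ℂ (v N m) (v N m) : ℂ))
        = (∑ m ∈ Finset.Icc 1 (N/2), ∑ p ∈ Q.filter (fun p => p*m ≤ N),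
            (inner ℂ (A (p*m)) (A (p*m)) : ℂ))
          + ∑ p ∈ Q, ∑ q ∈ Q.erase p, σ p q (min (N/p) (N/q)) := by
      calc (∑ m ∈ Finset.Icc 1 (N/2), (inner ℂ (v N m) (v N m) : ℂ))
          = ∑ m ∈ Finset.Icc 1 (N/2), ∑ p ∈ Q.filter (fun p => p*m ≤ N),
              ∑ q ∈ Q.filter (fun q => q*m ≤ N), (inner ℂ (A (p*m)) (A (q*m)) : ℂ) :=
            Finset.sum_congr rfl (fun m _ => hinner_expand N m)
        _ = ∑ m ∈ Finset.Icc 1 (N/2),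
              ((∑ p ∈ Q.filter (fun p => p*m ≤ N), (inner ℂ (A (p*m)) (A (p*m)) : ℂ))
                + ∑ p ∈ Q.filter (fun p => p*m ≤ N),
                    ∑ q ∈ (Q.filter (fun q => q*m ≤ N)).erase p,
                      (inner ℂ (A (p*m)) (A (q*m)) : ℂ)) :=
            Finset.sum_congr rfl (fun m _ => hsplit_pq _ _)
        _ = (∑ m ∈ Finset.Icc 1 (N/2), ∑ p ∈ Q.filter (fun p => p*m ≤ N),
              (inner ℂ (A (p*m)) (A (p*m)) : ℂ))
            + ∑ m ∈ Finset.Icc 1 (N/2), ∑ p ∈ Q.filter (fun p => p*m ≤ N),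
                ∑ q ∈ (Q.filter (fun q => q*m ≤ N)).erase p,
                  (inner ℂ (A (p*m)) (A (q*m)) : ℂ) := Finset.sum_add_distrib
        _ = _ := by rw [hoff_eq N]
    have e3 : (∑ m ∈ Finset.Icc 1 (N/2), ∑ p ∈ Q.filter (fun p => p*m ≤ N),
        (inner ℂ (A (p*m)) (A (p*m)) : ℂ)).re
        = ∑ m ∈ Finset.Icc 1 (N/2), ∑ p ∈ Q.filter (fun p => p*m ≤ N), ‖A (p*m)‖^2 := by
      rw [Complex.re_sum]
      apply Finset.sum_congr rfl; intro m _
      rw [Complex.re_sum]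
      apply Finset.sum_congr rfl; intro p _
      have h := inner_self_eq_norm_sq (𝕜 := ℂ) (E := H) (A (p*m))
      rw [RCLike.re_to_complex] at h
      exact h
    have e4 : (∑ p ∈ Q, ∑ q ∈ Q.erase p, σ p q (min (N/p) (N/q))).re
        ≤ ‖∑ p ∈ Q, ∑ q ∈ Q.erase p, σ p q (min (N/p) (N/q))‖ := by
      exact Complex.re_le_norm _
    rw [e1, e2, Complex.add_re]
    have h5 := hdiagbound N
    rw [← e3] at h5
    nlinarith [e4, hoffN]
  -- final W bound
  have hWfinal : ∀ N : ℕ, 1 ≤ N →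
      ‖∑ p ∈ Q, ∑ q ∈ Q.erase p, σ p q (min (N/p) (N/q))‖ ≤ D^2 * L * N →
      ((N:ℝ)*L)⁻¹ * ‖W N‖ ≤ ε/4 := by
    intro N h1N hoffN
    have hNpos : (0:ℝ) < N := by exact_mod_cast h1N
    have hW1 : ‖W N‖ ≤ Real.sqrt ((N/2:ℕ):ℝ) * Real.sqrt (2*D^2*((N:ℝ)*L)) := by
      have h1 : ‖W N‖ ≤ ∑ m ∈ Finset.Icc 1 (N/2), ‖v N m‖ := by
        rw [hWswap N]
        exact norm_sum_le _ _
      have h2 : ∑ m ∈ Finset.Icc 1 (N/2), ‖v N m‖ = ∑ m ∈ Finset.Icc 1 (N/2), |‖v N m‖| := by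
        apply Finset.sum_congr rfl; intro m _
        rw [abs_norm]
      have h3 := cs_abs (Finset.Icc 1 (N/2)) (fun m => ‖v N m‖)
      rw [Nat.card_Icc] at h3
      simp only [Nat.add_sub_cancel] at h3
      have h4 := hvnorm N hoffN
      calc ‖W N‖ ≤ ∑ m ∈ Finset.Icc 1 (N/2), |‖v N m‖| := by rw [← h2]; exact h1
        _ ≤ Real.sqrt ((N/2:ℕ):ℝ) * Real.sqrt (∑ m ∈ Finset.Icc 1 (N/2), ‖v N m‖^2) := h3
        _ ≤ Real.sqrt ((N/2:ℕ):ℝ) * Real.sqrt (2*D^2*((N:ℝ)*L)) :=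
            mul_le_mul_of_nonneg_left (Real.sqrt_le_sqrt h4) (Real.sqrt_nonneg _)
    have h6 : ((N:ℝ)*L)⁻¹ * ‖W N‖
        ≤ ((N:ℝ)*L)⁻¹ * (Real.sqrt ((N/2:ℕ):ℝ) * Real.sqrt (2*D^2*((N:ℝ)*L))) :=
      mul_le_mul_of_nonneg_left hW1 (by positivity)
    have h7 : (((N:ℝ)*L)⁻¹ * (Real.sqrt ((N/2:ℕ):ℝ) * Real.sqrt (2*D^2*((N:ℝ)*L))))^2
        = (((N:ℝ)*L)⁻¹)^2 * (((N/2:ℕ):ℝ) * (2*D^2*((N:ℝ)*L))) := by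
      rw [mul_pow, mul_pow, Real.sq_sqrt (by positivity), Real.sq_sqrt (by positivity)]
    have h8 : (((N:ℝ)*L)⁻¹)^2 * (((N/2:ℕ):ℝ) * (2*D^2*((N:ℝ)*L)))
        ≤ (((N:ℝ)*L)⁻¹)^2 * (((N:ℝ)*(2:ℝ)⁻¹) * (2*D^2*((N:ℝ)*L))) := by
      apply mul_le_mul_of_nonneg_left ?_ (by positivity)
      apply mul_le_mul_of_nonneg_right (cast_div_le' N 2) (by positivity)
    have h9 : (((N:ℝ)*L)⁻¹)^2 * (((N:ℝ)*(2:ℝ)⁻¹) * (2*D^2*((N:ℝ)*L))) = D^2/L := by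
      field_simp
    have h10 : D^2/L ≤ (ε/4)^2 := by
      rw [div_le_iff₀ hL0]
      nlinarith [hkey]
    apply le_of_sq_le_sq'' _ _ (by positivity) (by positivity)
    calc (((N:ℝ)*L)⁻¹ * ‖W N‖)^2
        ≤ (((N:ℝ)*L)⁻¹ * (Real.sqrt ((N/2:ℕ):ℝ) * Real.sqrt (2*D^2*((N:ℝ)*L))))^2 :=
          pow_le_pow_left₀ (by positivity) h6 2
      _ = (((N:ℝ)*L)⁻¹)^2 * (((N/2:ℕ):ℝ) * (2*D^2*((N:ℝ)*L))) := h7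
      _ ≤ (((N:ℝ)*L)⁻¹)^2 * (((N:ℝ)*(2:ℝ)⁻¹) * (2*D^2*((N:ℝ)*L))) := h8
      _ = D^2/L := h9
      _ ≤ (ε/4)^2 := h10
  -- decomposition identity
  have hfact : ∀ N : ℕ, ((L:ℝ):ℂ) • (∑ n ∈ Finset.Icc 1 N, A n) = W N + R N := by
    intro N
    rw [hWdef, hRdef]
    simp only []
    rw [← Finset.sum_add_distrib, Finset.smul_sum]
    apply Finset.sum_congr rfl
    intro n _
    rw [← add_smul]
    norm_cast
    congr 1
    push_cast
    ring
  -- conclusion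
  filter_upwards [eventually_ge_atTop 1, eventually_ge_atTop (2*Q.card), heventoff]
    with N h1N hQN hoffN
  have hNpos : (0:ℝ) < N := by exact_mod_cast h1N
  have hnorm1 : ‖(N:ℂ)⁻¹ • ∑ n ∈ Finset.Icc 1 N, A n‖
      = (N:ℝ)⁻¹ * ‖∑ n ∈ Finset.Icc 1 N, A n‖ := by
    rw [norm_smul, norm_inv, Complex.norm_natCast]
  have hLS : L * ‖∑ n ∈ Finset.Icc 1 N, A n‖ ≤ ‖W N‖ + ‖R N‖ := by
    have h1 : ‖((L:ℝ):ℂ) • (∑ n ∈ Finset.Icc 1 N, A n)‖ ≤ ‖W N‖ + ‖R N‖ := by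
      rw [hfact N]
      exact norm_add_le _ _
    rwa [norm_smul, Complex.norm_real, Real.norm_eq_abs, abs_of_pos hL0] at h1
  have hS : (N:ℝ)⁻¹ * ‖∑ n ∈ Finset.Icc 1 N, A n‖
      ≤ ((N:ℝ)*L)⁻¹ * ‖W N‖ + ((N:ℝ)*L)⁻¹ * ‖R N‖ := by
    have h2 : ((N:ℝ)*L)⁻¹ * (L * ‖∑ n ∈ Finset.Icc 1 N, A n‖)
        ≤ ((N:ℝ)*L)⁻¹ * (‖W N‖ + ‖R N‖) :=
      mul_le_mul_of_nonneg_left hLS (by positivity)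
    have h3 : ((N:ℝ)*L)⁻¹ * (L * ‖∑ n ∈ Finset.Icc 1 N, A n‖)
        = (N:ℝ)⁻¹ * ‖∑ n ∈ Finset.Icc 1 N, A n‖ := by
      field_simp
    rw [h3] at h2
    rw [mul_add] at h2
    exact h2
  rw [hnorm1]
  have hWf := hWfinal N h1N hoffN
  have hRf := hRfinal N h1N hQN
  calc (N:ℝ)⁻¹ * ‖∑ n ∈ Finset.Icc 1 N, A n‖
      ≤ ((N:ℝ)*L)⁻¹ * ‖W N‖ + ((N:ℝ)*L)⁻¹ * ‖R N‖ := hS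
    _ ≤ ε/4 + ε/2 := add_le_add hWf hRf
    _ < ε := by linarith
end

section
/- Let P₁,…,P_k ∈ ℤ[n] be pairwise independent polynomials none of which has the form c·n^d + b. Then the set D = {(p,q) ∈ ℙ² : p ≠ q, and there exist 1 ≤ i ≤ j ≤ k and nonzero integers x, y such that x·P_i(pn) + y·P_j(qn) is the zero polynomial in n} is finite (possibly empty). -/
open Polynomial

lemma coeff_comp_C_mul_X (P : Polynomial ℤ) (r : ℤ) (t : ℕ) :
    (P.comp (C r * X)).coeff t = P.coeff t * r ^ t := by
  induction P using Polynomial.induction_on' with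
  | add p q hp hq => simp only [add_comp, coeff_add, hp, hq, add_mul]
  | monomial n a =>
      rw [monomial_comp, mul_pow, ← C_pow, ← mul_assoc, ← C_mul, C_mul_X_pow_eq_monomial,
        coeff_monomial, coeff_monomial]
      split_ifs with h
      · subst h; ring
      · ring

lemma exists_two_coeffs (P : Polynomial ℤ)
    (h : ¬ ∃ (c b : ℤ) (d : ℕ), P = C c * X ^ d + C b) :
    ∃ m m' : ℕ, 0 < m ∧ m < m' ∧ P.coeff m ≠ 0 ∧ P.coeff m' ≠ 0 := by
  by_contra hc
  push_neg at hc
  apply h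
  by_cases hone : ∃ d, 0 < d ∧ P.coeff d ≠ 0
  · obtain ⟨d, hd, hcd⟩ := hone
    refine ⟨P.coeff d, P.coeff 0, d, ?_⟩
    ext t
    simp only [coeff_add, coeff_C_mul, coeff_X_pow, coeff_C]
    rcases eq_or_ne t d with rfl | htd
    · rw [if_pos rfl, mul_one, if_neg hd.ne', add_zero]
    · rcases eq_or_ne t 0 with rfl | ht0
      · simp [htd]
      · have hzt : P.coeff t = 0 := by
          by_contra hnz
          rcases lt_or_gt_of_ne htd with h1 | h1
          · exact hcd (hc t d (Nat.pos_of_ne_zero ht0) h1 hnz)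
          · exact hnz (hc d t hd h1 hcd)
        simp [htd, ht0, hzt]
  · push_neg at hone
    refine ⟨0, P.coeff 0, 1, ?_⟩
    ext t
    simp only [coeff_add, coeff_C_mul, coeff_X_pow, coeff_C]
    rcases eq_or_ne t 0 with rfl | ht0
    · simp
    · simp [ht0, hone t (Nat.pos_of_ne_zero ht0)]

theorem stmt12 (k : ℕ) (hk : 0 < k) (P : Fin k → Polynomial ℤ)
    (hindep : ∀ i j : Fin k, i < j → ∀ x y : ℤ, x ≠ 0 → y ≠ 0 →
      ¬ ∃ c : ℤ, C x * P i + C y * P j = C c)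
    (hform : ∀ i : Fin k, ¬ ∃ (c b : ℤ) (d : ℕ), P i = C c * X ^ d + C b) :
    Set.Finite {pq : ℕ × ℕ | pq.1.Prime ∧ pq.2.Prime ∧ pq.1 ≠ pq.2 ∧
      ∃ i j : Fin k, i ≤ j ∧ ∃ x y : ℤ, x ≠ 0 ∧ y ≠ 0 ∧
        C x * (P i).comp (C (pq.1 : ℤ) * X) + C y * (P j).comp (C (pq.2 : ℤ) * X) = 0} := by
  have key : ∀ i : Fin k, ∃ m m' : ℕ, 0 < m ∧ m < m' ∧ (P i).coeff m ≠ 0 ∧ (P i).coeff m' ≠ 0 :=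
    fun i => exists_two_coeffs (P i) (hform i)
  choose m m' hm hmm' ha ha' using key
  set N : ℕ := (Finset.univ : Finset (Fin k × Fin k)).sup
    (fun ij => max (((P ij.1).coeff (m ij.1) * (P ij.2).coeff (m' ij.1)).natAbs)
      (((P ij.1).coeff (m' ij.1) * (P ij.2).coeff (m ij.1)).natAbs)) with hN
  apply Set.Finite.subset ((Set.finite_Iic N).prod (Set.finite_Iic N))
  rintro ⟨p, q⟩ ⟨hp, hq, hpq, i, j, hij, x, y, hx, hy, hE⟩
  have hcoeffs : ∀ t : ℕ, x * ((P i).coeff t * (p : ℤ) ^ t)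
      + y * ((P j).coeff t * (q : ℤ) ^ t) = 0 := by
    intro t
    have := congrArg (fun f => Polynomial.coeff f t) hE
    simpa only [coeff_add, coeff_zero, coeff_C_mul, coeff_comp_C_mul_X] using this
  set M : ℕ := m i
  set M' : ℕ := m' i
  have hMM : M < M' := hmm' i
  obtain ⟨d, hd0, hdM⟩ : ∃ d : ℕ, 0 < d ∧ M' = M + d := ⟨M' - M, by omega, by omega⟩
  set aM : ℤ := (P i).coeff M
  set aM' : ℤ := (P i).coeff M'
  set bM : ℤ := (P j).coeff M
  set bM' : ℤ := (P j).coeff M'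
  have hpz : (p : ℤ) ≠ 0 := Int.natCast_ne_zero.mpr hp.ne_zero
  have hqz : (q : ℤ) ≠ 0 := Int.natCast_ne_zero.mpr hq.ne_zero
  have e1 : x * (aM * (p : ℤ) ^ M) + y * (bM * (q : ℤ) ^ M) = 0 := hcoeffs M
  have e2 : x * (aM' * (p : ℤ) ^ M') + y * (bM' * (q : ℤ) ^ M') = 0 := hcoeffs M'
  have hbM : bM ≠ 0 := by
    intro h0
    rw [h0] at e1
    simp only [mul_zero, zero_mul, add_zero] at e1
    exact (mul_ne_zero hx (mul_ne_zero (ha i) (pow_ne_zero M hpz))) e1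
  have hbM' : bM' ≠ 0 := by
    intro h0
    rw [h0] at e2
    simp only [mul_zero, zero_mul, add_zero] at e2
    exact (mul_ne_zero hx (mul_ne_zero (ha' i) (pow_ne_zero M' hpz))) e2
  rw [hdM, pow_add, pow_add] at e2
  have cross : aM * bM' * (q : ℤ) ^ d = aM' * bM * (p : ℤ) ^ d := by
    have hmain : (x * y * ((p : ℤ) ^ M * (q : ℤ) ^ M)) * (aM * bM' * (q : ℤ) ^ d)
        = (x * y * ((p : ℤ) ^ M * (q : ℤ) ^ M)) * (aM' * bM * (p : ℤ) ^ d) := by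
      linear_combination (y * bM' * (q : ℤ) ^ M * (q : ℤ) ^ d) * e1
        - (y * bM * (q : ℤ) ^ M) * e2
    exact mul_left_cancel₀ (mul_ne_zero (mul_ne_zero hx hy)
      (mul_ne_zero (pow_ne_zero M hpz) (pow_ne_zero M hqz))) hmain
  have hpp : Prime (p : ℤ) := Int.prime_iff_natAbs_prime.mpr (by simpa using hp)
  have hqp : Prime (q : ℤ) := Int.prime_iff_natAbs_prime.mpr (by simpa using hq)
  have hpq' : ¬ (p : ℤ) ∣ (q : ℤ) := by
    intro hdvd
    have h2 : p ∣ q := Int.natCast_dvd_natCast.mp hdvd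
    exact hpq ((Nat.prime_dvd_prime_iff_eq hp hq).mp h2)
  have hqp' : ¬ (q : ℤ) ∣ (p : ℤ) := by
    intro hdvd
    have h2 : q ∣ p := Int.natCast_dvd_natCast.mp hdvd
    exact hpq ((Nat.prime_dvd_prime_iff_eq hq hp).mp h2).symm
  have hpdvd : (p : ℤ) ∣ aM * bM' := by
    have h1 : (p : ℤ) ∣ (aM * bM') * (q : ℤ) ^ d := by
      rw [cross]
      exact Dvd.dvd.mul_left (dvd_pow_self _ hd0.ne') _
    rcases hpp.dvd_mul.mp h1 with h2 | h2
    · exact h2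
    · exact absurd (hpp.dvd_of_dvd_pow h2) hpq'
  have hqdvd : (q : ℤ) ∣ aM' * bM := by
    have h1 : (q : ℤ) ∣ (aM' * bM) * (p : ℤ) ^ d := by
      rw [← cross]
      exact Dvd.dvd.mul_left (dvd_pow_self _ hd0.ne') _
    rcases hqp.dvd_mul.mp h1 with h2 | h2
    · exact h2
    · exact absurd (hqp.dvd_of_dvd_pow h2) hqp'
  have hple : p ≤ (aM * bM').natAbs := by
    have h1 : p ∣ (aM * bM').natAbs := by
      have := Int.natAbs_dvd_natAbs.mpr hpdvd
      simpa using this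
    exact Nat.le_of_dvd (Int.natAbs_pos.mpr (mul_ne_zero (ha i) hbM')) h1
  have hqle : q ≤ (aM' * bM).natAbs := by
    have h1 : q ∣ (aM' * bM).natAbs := by
      have := Int.natAbs_dvd_natAbs.mpr hqdvd
      simpa using this
    exact Nat.le_of_dvd (Int.natAbs_pos.mpr (mul_ne_zero (ha' i) hbM)) h1
  have hsup := Finset.le_sup (f := fun ij : Fin k × Fin k =>
    max (((P ij.1).coeff (m ij.1) * (P ij.2).coeff (m' ij.1)).natAbs)
      (((P ij.1).coeff (m' ij.1) * (P ij.2).coeff (m ij.1)).natAbs))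
    (Finset.mem_univ (i, j))
  refine ⟨Set.mem_Iic.mpr ?_, Set.mem_Iic.mpr ?_⟩
  · exact le_trans hple (le_trans (le_max_left _ _) hsup)
  · exact le_trans hqle (le_trans (le_max_right _ _) hsup)
end

section
/- Let k ∈ ℕ and E ⊆ ℤ^k. Then there exist a probability space (X,𝒳,μ), commuting invertible measure preserving transformations T₁,…,T_k on X, and A ∈ 𝒳 with μ(A) = d*(E), such that for all m ∈ ℕ and all vectors d₁,…,d_m ∈ ℤ^k (with d_j = (d_{j,1},…,d_{j,k})): d*(E ∩ (E−d₁) ∩ ⋯ ∩ (E−d_m)) ≥ μ(A ∩ ∏_{i=1}^k T_i^{−d_{1,i}}A ∩ ⋯ ∩ ∏_{i=1}^k T_i^{−d_{m,i}}A). -/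
open MeasureTheory Filter Topology
open scoped Classical

/-- Upper Banach density of a subset of `ℤᵏ`, computed over cubic boxes. -/
noncomputable def upperBanachDensityZ {k : ℕ} (E : Set (Fin k → ℤ)) : ℝ :=
  Filter.limsup
    (fun N : ℕ => ⨆ a : Fin k → ℤ,
      (((Fintype.piFinset fun i => Finset.Ioc (a i) (a i + N)).filter (· ∈ E)).card : ℝ) /
        (N ^ k))
    Filter.atTop


namespace FCorr

variable {k : ℕ}

abbrev XS (k : ℕ) : Type := (Fin k → ℤ) → Bool

def shift (u : Fin k → ℤ) (x : XS k) : XS k := fun g => x (g + u)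

theorem shift_zero : shift (0 : Fin k → ℤ) = id := by
  funext x g; simp [shift]

theorem shift_add (u v : Fin k → ℤ) :
    shift (u + v) = (shift u ∘ shift v : XS k → XS k) := by
  funext x g; simp [shift, add_assoc]

theorem continuous_shift (u : Fin k → ℤ) : Continuous (shift (k := k) u) :=
  continuous_pi fun g => continuous_apply (g + u)

def shiftHomeo (u : Fin k → ℤ) : XS k ≃ₜ XS k where
  toFun := shift u
  invFun := shift (-u)
  left_inv := fun x => by
    rw [← Function.comp_apply (f := shift (-u)), ← shift_add, neg_add_cancel, shift_zero, id_eq]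
  right_inv := fun x => by
    rw [← Function.comp_apply (f := shift u), ← shift_add, add_neg_cancel, shift_zero, id_eq]
  continuous_toFun := continuous_shift u
  continuous_invFun := continuous_shift (-u)

noncomputable def xind (E : Set (Fin k → ℤ)) : XS k := fun g => decide (g ∈ E)

noncomputable def box (a : Fin k → ℤ) (N : ℕ) : Finset (Fin k → ℤ) :=
  Fintype.piFinset fun i => Finset.Ioc (a i) (a i + N)

theorem card_box (a : Fin k → ℤ) (N : ℕ) : (box a N).card = N ^ k := by
  simp [box, Fintype.card_piFinset, Int.card_Ioc]

noncomputable def cnt (E : Set (Fin k → ℤ)) (a : Fin k → ℤ) (N : ℕ) : ℝ :=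
  (((box a N).filter (· ∈ E)).card : ℝ) / ((N : ℝ) ^ k)

noncomputable def dens (E : Set (Fin k → ℤ)) (N : ℕ) : ℝ := ⨆ a, cnt E a N

theorem ubd_eq (E : Set (Fin k → ℤ)) : upperBanachDensityZ E = limsup (dens E) atTop := rfl

theorem cnt_nonneg (E : Set (Fin k → ℤ)) (a : Fin k → ℤ) (N : ℕ) : 0 ≤ cnt E a N :=
  div_nonneg (by positivity) (by positivity)

theorem cnt_le_one (E : Set (Fin k → ℤ)) (a : Fin k → ℤ) (N : ℕ) : cnt E a N ≤ 1 := by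
  apply div_le_one_of_le₀ _ (by positivity)
  have h := Finset.card_le_card (Finset.filter_subset (· ∈ E) (box a N))
  rw [card_box a N] at h
  exact_mod_cast h

theorem bddAbove_cnt (E : Set (Fin k → ℤ)) (N : ℕ) :
    BddAbove (Set.range fun a => cnt E a N) :=
  ⟨1, by rintro x ⟨a, rfl⟩; exact cnt_le_one E a N⟩

theorem cnt_le_dens (E : Set (Fin k → ℤ)) (a : Fin k → ℤ) (N : ℕ) : cnt E a N ≤ dens E N :=
  le_ciSup (bddAbove_cnt E N) a

theorem dens_nonneg (E : Set (Fin k → ℤ)) (N : ℕ) : 0 ≤ dens E N :=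
  Real.iSup_nonneg fun a => cnt_nonneg E a N

theorem dens_le_one (E : Set (Fin k → ℤ)) (N : ℕ) : dens E N ≤ 1 :=
  Real.iSup_le (fun a => cnt_le_one E a N) zero_le_one

end FCorr

section Chunk2
namespace FCorr

variable {k : ℕ}

noncomputable def dstar (E : Set (Fin k → ℤ)) : ℝ := limsup (dens E) atTop

theorem exists_good_a (E : Set (Fin k → ℤ)) (N : ℕ) :
    ∃ a, dens E N - 1/(N+1) < cnt E a N := by
  have h0 : (0:ℝ) < 1/(N+1) := by positivity
  have : dens E N - 1/(N+1) < ⨆ a, cnt E a N := by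
    simpa [dens] using sub_lt_self (dens E N) h0
  exact exists_lt_of_lt_ciSup this

theorem isBdd (E : Set (Fin k → ℤ)) : IsBoundedUnder (· ≤ ·) atTop (dens E) :=
  ⟨1, eventually_map.2 (Eventually.of_forall (dens_le_one E))⟩

theorem isBddBelow (E : Set (Fin k → ℤ)) : IsBoundedUnder (· ≥ ·) atTop (dens E) :=
  ⟨0, eventually_map.2 (Eventually.of_forall (dens_nonneg E))⟩

theorem neBot_aux (E : Set (Fin k → ℤ)) :
    (atTop ⊓ comap (dens E) (𝓝 (dstar E))).NeBot := by
  rw [Filter.inf_neBot_iff]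
  intro s hs t ht
  rcases mem_comap.1 ht with ⟨V, hV, hVt⟩
  rcases Metric.mem_nhds_iff.1 hV with ⟨ε, hε, hball⟩
  have h1 : ∃ᶠ N in atTop, dstar E - ε < dens E N :=
    frequently_lt_of_lt_limsup (isBddBelow E).isCoboundedUnder_le
      (by simpa [dstar] using sub_lt_self (dstar E) hε)
  have h2 : ∀ᶠ N in atTop, dens E N < dstar E + ε :=
    eventually_lt_of_limsup_lt (by simpa [dstar] using lt_add_of_pos_right (dstar E) hε) (isBdd E)
  have h3 : ∃ᶠ N in atTop, N ∈ s ∧ dens E N ∈ V := by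
    refine ((h1.and_eventually h2).and_eventually hs).mono ?_
    rintro N ⟨⟨hN1, hN2⟩, hN3⟩
    refine ⟨hN3, hball ?_⟩
    rw [Metric.mem_ball, Real.dist_eq, abs_lt]
    constructor <;> linarith
  rcases h3.exists with ⟨N, hN1, hN2⟩
  exact ⟨N, hN1, hVt hN2⟩

noncomputable def UF (E : Set (Fin k → ℤ)) : Ultrafilter ℕ :=
  haveI := neBot_aux E
  Ultrafilter.of (atTop ⊓ comap (dens E) (𝓝 (dstar E)))

theorem UF_le_atTop (E : Set (Fin k → ℤ)) : (UF E : Filter ℕ) ≤ atTop :=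
  haveI := neBot_aux E
  (Ultrafilter.of_le _).trans inf_le_left

theorem UF_tendsto (E : Set (Fin k → ℤ)) : Tendsto (dens E) (UF E) (𝓝 (dstar E)) :=
  haveI := neBot_aux E
  tendsto_iff_comap.2 ((Ultrafilter.of_le _).trans inf_le_right)

noncomputable def aa (E : Set (Fin k → ℤ)) (N : ℕ) : Fin k → ℤ :=
  Classical.choose (exists_good_a E N)

theorem aa_spec (E : Set (Fin k → ℤ)) (N : ℕ) :
    dens E N - 1/(N+1) < cnt E (aa E N) N :=
  Classical.choose_spec (exists_good_a E N)

/-- empirical average of membership of orbit points in `S`. -/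
noncomputable def nu (E : Set (Fin k → ℤ)) (S : Set (XS k)) (N : ℕ) : ℝ :=
  (((box (aa E N) N).filter (fun n => shift n (xind E) ∈ S)).card : ℝ) / ((N : ℝ) ^ k)

theorem nu_nonneg (E : Set (Fin k → ℤ)) (S : Set (XS k)) (N : ℕ) : 0 ≤ nu E S N :=
  div_nonneg (by positivity) (by positivity)

theorem nu_le_one (E : Set (Fin k → ℤ)) (S : Set (XS k)) (N : ℕ) : nu E S N ≤ 1 := by
  apply div_le_one_of_le₀ _ (by positivity)
  have h := Finset.card_le_card
    (Finset.filter_subset (fun n => shift n (xind E) ∈ S) (box (aa E N) N))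
  rw [card_box] at h
  exact_mod_cast h

theorem filter_sub_filter (E : Set (Fin k → ℤ)) {S S' : Set (XS k)} (h : S ⊆ S') (N : ℕ) :
    (box (aa E N) N).filter (fun n => shift n (xind E) ∈ S) ⊆
      (box (aa E N) N).filter (fun n => shift n (xind E) ∈ S') := by
  intro n hn
  rw [Finset.mem_filter] at *
  exact ⟨hn.1, h hn.2⟩

theorem nu_mono (E : Set (Fin k → ℤ)) {S S' : Set (XS k)} (h : S ⊆ S') (N : ℕ) :
    nu E S N ≤ nu E S' N := by
  unfold nu
  apply div_le_div_of_nonneg_right (hc := by positivity)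
  exact_mod_cast Finset.card_le_card (filter_sub_filter E h N)

theorem nu_union_disjoint (E : Set (Fin k → ℤ)) {S S' : Set (XS k)} (h : Disjoint S S') (N : ℕ) :
    nu E (S ∪ S') N = nu E S N + nu E S' N := by
  have hd : Disjoint ((box (aa E N) N).filter (fun n => shift n (xind E) ∈ S))
      ((box (aa E N) N).filter (fun n => shift n (xind E) ∈ S')) := by
    rw [Finset.disjoint_left]
    intro n hn hn'
    exact Set.disjoint_left.1 h (Finset.mem_filter.1 hn).2 (Finset.mem_filter.1 hn').2
  have hcard : ((box (aa E N) N).filter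
        (fun n => shift n (xind E) ∈ S ∨ shift n (xind E) ∈ S')).card
      = ((box (aa E N) N).filter (fun n => shift n (xind E) ∈ S)).card +
        ((box (aa E N) N).filter (fun n => shift n (xind E) ∈ S')).card := by
    rw [Finset.filter_or, Finset.card_union_of_disjoint hd]
  unfold nu
  simp only [Set.mem_union]
  rw [hcard]
  push_cast
  rw [add_div]

theorem nu_union_le (E : Set (Fin k → ℤ)) (S S' : Set (XS k)) (N : ℕ) :
    nu E (S ∪ S') N ≤ nu E S N + nu E S' N := by
  have hcard : ((box (aa E N) N).filter
        (fun n => shift n (xind E) ∈ S ∨ shift n (xind E) ∈ S')).card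
      ≤ ((box (aa E N) N).filter (fun n => shift n (xind E) ∈ S)).card +
        ((box (aa E N) N).filter (fun n => shift n (xind E) ∈ S')).card := by
    rw [Finset.filter_or]
    exact Finset.card_union_le _ _
  unfold nu
  simp only [Set.mem_union]
  rw [← add_div]
  apply div_le_div_of_nonneg_right (hc := by positivity)
  exact_mod_cast hcard

theorem nu_univ (E : Set (Fin k → ℤ)) (N : ℕ) (hN : 1 ≤ N) : nu E Set.univ N = 1 := by
  unfold nu
  simp only [Set.mem_univ, Finset.filter_true, card_box]
  push_cast
  rw [div_self]
  positivity

end FCorr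
end Chunk2

section Chunk3
namespace FCorr

variable {k : ℕ}

theorem exists_lim (E : Set (Fin k → ℤ)) (S : Set (XS k)) :
    ∃ L, Tendsto (fun N => nu E S N) (UF E) (𝓝 L) := by
  have hle : ((UF E).map (fun N => nu E S N) : Filter ℝ) ≤ 𝓟 (Set.Icc (0:ℝ) 1) := by
    rw [Ultrafilter.coe_map, le_principal_iff, mem_map]
    exact univ_mem' fun N => ⟨nu_nonneg E S N, nu_le_one E S N⟩
  obtain ⟨L, -, hL⟩ := isCompact_Icc.ultrafilter_le_nhds _ hle
  exact ⟨L, by rwa [Ultrafilter.coe_map] at hL⟩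

noncomputable def lfn (E : Set (Fin k → ℤ)) (S : Set (XS k)) : ℝ :=
  Classical.choose (exists_lim E S)

theorem hl (E : Set (Fin k → ℤ)) (S : Set (XS k)) :
    Tendsto (fun N => nu E S N) (UF E) (𝓝 (lfn E S)) :=
  Classical.choose_spec (exists_lim E S)

theorem lfn_nonneg (E : Set (Fin k → ℤ)) (S : Set (XS k)) : 0 ≤ lfn E S :=
  ge_of_tendsto (hl E S) (Eventually.of_forall fun N => nu_nonneg E S N)

theorem lfn_le_one (E : Set (Fin k → ℤ)) (S : Set (XS k)) : lfn E S ≤ 1 :=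
  le_of_tendsto (hl E S) (Eventually.of_forall fun N => nu_le_one E S N)

theorem lfn_mono (E : Set (Fin k → ℤ)) {S S' : Set (XS k)} (h : S ⊆ S') :
    lfn E S ≤ lfn E S' :=
  le_of_tendsto_of_tendsto' (hl E S) (hl E S') fun N => nu_mono E h N

theorem lfn_union_disjoint (E : Set (Fin k → ℤ)) {S S' : Set (XS k)} (h : Disjoint S S') :
    lfn E (S ∪ S') = lfn E S + lfn E S' :=
  tendsto_nhds_unique (hl E (S ∪ S'))
    (((hl E S).add (hl E S')).congr fun N => (nu_union_disjoint E h N).symm)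

theorem lfn_union_le (E : Set (Fin k → ℤ)) (S S' : Set (XS k)) :
    lfn E (S ∪ S') ≤ lfn E S + lfn E S' :=
  le_of_tendsto_of_tendsto' (hl E (S ∪ S')) ((hl E S).add (hl E S'))
    fun N => nu_union_le E S S' N

theorem lfn_univ (E : Set (Fin k → ℤ)) : lfn E Set.univ = 1 := by
  have hev : ∀ᶠ N in (UF E : Filter ℕ), nu E Set.univ N = 1 :=
    Eventually.filter_mono (UF_le_atTop E)
      ((eventually_ge_atTop 1).mono fun N hN => nu_univ E N hN)
  exact tendsto_nhds_unique (hl E Set.univ) (tendsto_const_nhds.congr' (hev.mono fun N h => h.symm))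

/-- The base clopen set. -/
def Abase (k : ℕ) : Set (XS k) := {x : XS k | x 0 = true}

theorem mem_Abase_iff (E : Set (Fin k → ℤ)) (n : Fin k → ℤ) :
    shift n (xind E) ∈ Abase k ↔ n ∈ E := by
  simp [Abase, shift, xind]

theorem nu_eq_cnt_of_iff (E E' : Set (Fin k → ℤ)) (S : Set (XS k))
    (h : ∀ n : Fin k → ℤ, shift n (xind E) ∈ S ↔ n ∈ E') (N : ℕ) :
    nu E S N = cnt E' (aa E N) N := by
  unfold nu cnt
  congr 1
  exact_mod_cast congrArg Finset.card (Finset.filter_congr fun n _ => h n)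

theorem nu_Abase (E : Set (Fin k → ℤ)) (N : ℕ) :
    nu E (Abase k) N = cnt E (aa E N) N :=
  nu_eq_cnt_of_iff E E (Abase k) (mem_Abase_iff E) N

theorem lfn_Abase (E : Set (Fin k → ℤ)) : lfn E (Abase k) = dstar E := by
  have hsq : Tendsto (fun N => nu E (Abase k) N - dens E N) atTop (𝓝 0) := by
    apply squeeze_zero_norm ?_ (tendsto_one_div_add_atTop_nhds_zero_nat)
    intro N
    rw [Real.norm_eq_abs, abs_le]
    have h1 := aa_spec E N
    have h2 : cnt E (aa E N) N ≤ dens E N := cnt_le_dens E (aa E N) N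
    rw [nu_Abase]
    have h0 : (0:ℝ) ≤ 1/(N+1) := by positivity
    constructor <;> nlinarith
  have : Tendsto (fun N => dens E N + (nu E (Abase k) N - dens E N)) (UF E)
      (𝓝 (dstar E + 0)) := (UF_tendsto E).add (hsq.mono_left (UF_le_atTop E))
  have h2 : Tendsto (fun N => nu E (Abase k) N) (UF E) (𝓝 (dstar E)) := by
    simpa using this.congr fun N => by ring
  exact tendsto_nhds_unique (hl E (Abase k)) h2

theorem lfn_le_dstar (E E' : Set (Fin k → ℤ)) (S : Set (XS k))
    (h : ∀ n : Fin k → ℤ, shift n (xind E) ∈ S ↔ n ∈ E') :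
    lfn E S ≤ dstar E' := by
  have h1 : ∀ N, nu E S N ≤ dens E' N := fun N => by
    rw [nu_eq_cnt_of_iff E E' S h N]; exact cnt_le_dens E' (aa E N) N
  have e1 : lfn E S = limsup (fun N => nu E S N) (UF E) := ((hl E S).limsup_eq).symm
  rw [e1]
  have hcb : IsCoboundedUnder (· ≤ ·) (UF E : Filter ℕ) (fun N => nu E S N) :=
    IsBoundedUnder.isCoboundedUnder_le
      ⟨0, eventually_map.2 (Eventually.of_forall fun N => nu_nonneg E S N)⟩
  have hb : IsBoundedUnder (· ≤ ·) (UF E : Filter ℕ) (dens E') :=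
    ⟨1, eventually_map.2 (Eventually.of_forall fun N => dens_le_one E' N)⟩
  refine le_trans (limsup_le_limsup (Eventually.of_forall h1) hcb hb) ?_
  refine le_trans (limsup_le_limsup_of_le (UF_le_atTop E) ?_ (isBdd E')) le_rfl
  exact IsBoundedUnder.isCoboundedUnder_le
    ⟨0, eventually_map.2 (Eventually.of_forall fun N => dens_nonneg E' N)⟩

end FCorr
end Chunk3

section Chunk4
namespace FCorr

variable {k : ℕ}

theorem shift_neg_shift (u : Fin k → ℤ) (x : XS k) : shift (-u) (shift u x) = x := by
  rw [← Function.comp_apply (f := shift (-u)), ← shift_add, neg_add_cancel, shift_zero, id_eq]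

theorem shift_shift_neg (u : Fin k → ℤ) (x : XS k) : shift u (shift (-u) x) = x := by
  rw [← Function.comp_apply (f := shift u), ← shift_add, add_neg_cancel, shift_zero, id_eq]

theorem mem_image_shift (u : Fin k → ℤ) (S : Set (XS k)) (x : XS k) :
    x ∈ shift u '' S ↔ shift (-u) x ∈ S := by
  constructor
  · rintro ⟨y, hy, rfl⟩
    rwa [shift_neg_shift]
  · intro h
    exact ⟨shift (-u) x, h, shift_shift_neg u x⟩

theorem shift_apply_shift (u v : Fin k → ℤ) (x : XS k) :
    shift u (shift v x) = shift (u + v) x := by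
  rw [shift_add]; rfl

theorem mem_box_sub (a u n : Fin k → ℤ) (N : ℕ) :
    n - u ∈ box (a - u) N ↔ n ∈ box a N := by
  simp only [box, Fintype.mem_piFinset, Pi.sub_apply, Finset.mem_Ioc]
  constructor <;> intro h i <;> have := h i <;> omega

theorem card_image_filter (E : Set (Fin k → ℤ)) (u : Fin k → ℤ) (S : Set (XS k)) (N : ℕ) :
    ((box (aa E N) N).filter (fun n => shift n (xind E) ∈ shift u '' S)).card
    = ((box (aa E N - u) N).filter (fun n => shift n (xind E) ∈ S)).card := by
  apply Finset.card_bij (fun n _ => n - u)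
  · intro n hn
    rw [Finset.mem_filter] at hn ⊢
    refine ⟨(mem_box_sub _ _ _ _).2 hn.1, ?_⟩
    have h2 := (mem_image_shift u S _).1 hn.2
    rwa [shift_apply_shift, neg_add_eq_sub] at h2
  · intro a₁ h₁ a₂ h₂ h
    exact sub_left_injective h
  · intro b hb
    rw [Finset.mem_filter] at hb
    refine ⟨b + u, ?_, by simp⟩
    rw [Finset.mem_filter]
    constructor
    · have := (mem_box_sub (aa E N) u (b + u) N).1 (by simpa using hb.1)
      exact this
    · rw [mem_image_shift, shift_apply_shift, neg_add_eq_sub]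
      simpa using hb.2

theorem filter_card_diff_le {α : Type*} [DecidableEq α] (B B' : Finset α) (p : α → Prop)
    [DecidablePred p] :
    (B.filter p).card ≤ (B'.filter p).card + (B.card - (B ∩ B').card) := by
  have hsub : B.filter p ⊆ ((B ∩ B').filter p) ∪ (B \ B') := by
    intro n hn
    rw [Finset.mem_filter] at hn
    by_cases h : n ∈ B'
    · exact Finset.mem_union_left _ (Finset.mem_filter.2 ⟨Finset.mem_inter.2 ⟨hn.1, h⟩, hn.2⟩)
    · exact Finset.mem_union_right _ (Finset.mem_sdiff.2 ⟨hn.1, h⟩)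
  have h1 : ((B ∩ B').filter p).card ≤ (B'.filter p).card :=
    Finset.card_le_card (fun n hn => by
      rw [Finset.mem_filter] at hn ⊢
      exact ⟨(Finset.mem_inter.1 hn.1).2, hn.2⟩)
  have h2 : (B ∩ B').card + (B \ B').card = B.card := Finset.card_inter_add_card_sdiff B B'
  calc (B.filter p).card ≤ _ := Finset.card_le_card hsub
    _ ≤ ((B ∩ B').filter p).card + (B \ B').card := Finset.card_union_le _ _
    _ ≤ (B'.filter p).card + (B.card - (B ∩ B').card) := by omega

theorem box_inter (a b : Fin k → ℤ) (N : ℕ) :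
    box a N ∩ box b N
      = Fintype.piFinset fun i => Finset.Ioc (max (a i) (b i)) (min (a i + N) (b i + N)) := by
  ext n
  simp only [Finset.mem_inter, box, Fintype.mem_piFinset, Finset.mem_Ioc, max_lt_iff, le_min_iff]
  constructor
  · rintro ⟨h1, h2⟩ i
    exact ⟨⟨(h1 i).1, (h2 i).1⟩, (h1 i).2, (h2 i).2⟩
  · intro h
    exact ⟨fun i => ⟨(h i).1.1, (h i).2.1⟩, fun i => ⟨(h i).1.2, (h i).2.2⟩⟩

theorem card_box_inter (a u : Fin k → ℤ) (N : ℕ) :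
    ((box a N) ∩ (box (a - u) N)).card = ∏ i, ((N : ℤ) - |u i|).toNat := by
  rw [box_inter, Fintype.card_piFinset]
  apply Finset.prod_congr rfl
  intro i _
  rw [Int.card_Ioc]
  congr 1
  simp only [Pi.sub_apply]
  rcases le_total (u i) 0 with h | h
  · rw [abs_of_nonpos h, max_eq_right (by omega), min_eq_left (by omega)]
    ring
  · rw [abs_of_nonneg h, max_eq_left (by omega), min_eq_right (by omega)]
    ring

theorem prod_ratio_tendsto (u : Fin k → ℤ) :
    Tendsto (fun N : ℕ => (∏ i, ((((N : ℤ) - |u i|).toNat : ℝ))) / (N : ℝ) ^ k)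
      atTop (𝓝 1) := by
  have h : ∀ i : Fin k,
      Tendsto (fun N : ℕ => ((((N : ℤ) - |u i|).toNat : ℝ)) / (N : ℝ)) atTop (𝓝 1) := by
    intro i
    have h1 : Tendsto (fun N : ℕ => 1 - ((|u i| : ℤ) : ℝ) / (N : ℝ)) atTop (𝓝 1) := by
      simpa using tendsto_const_nhds.sub
        (tendsto_const_div_atTop_nhds_zero_nat (((|u i| : ℤ) : ℝ)))
    apply h1.congr'
    filter_upwards [eventually_ge_atTop ((|u i|).toNat + 1)] with N hN
    have hN' : ((|u i| : ℤ)) ≤ (N : ℤ) := by omega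
    have hN0 : (0:ℝ) < (N : ℝ) := by
      have h0 : (0:ℕ) < N := by omega
      exact_mod_cast h0
    have hcast : ((((N : ℤ) - |u i|).toNat : ℕ) : ℝ) = (N : ℝ) - ((|u i| : ℤ) : ℝ) := by
      rw [← Int.cast_natCast, Int.toNat_of_nonneg (by omega)]
      push_cast
      ring
    rw [hcast]
    field_simp
  have hprod := tendsto_finset_prod (Finset.univ : Finset (Fin k)) (fun i _ => h i)
  have hfe : (fun N : ℕ => (∏ i, ((((N : ℤ) - |u i|).toNat : ℝ))) / (N : ℝ) ^ k)
      = fun N : ℕ => ∏ i, ((((N : ℤ) - |u i|).toNat : ℝ)) / (N : ℝ) := by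
    funext N
    rw [Finset.prod_div_distrib, Finset.prod_const, Finset.card_univ, Fintype.card_fin]
  rw [hfe]
  simpa using hprod

end FCorr
end Chunk4

section Chunk5
namespace FCorr

variable {k : ℕ}

theorem nu_image_sub_tendsto (E : Set (Fin k → ℤ)) (u : Fin k → ℤ) (S : Set (XS k)) :
    Tendsto (fun N => nu E (shift u '' S) N - nu E S N) atTop (𝓝 0) := by
  have hg : Tendsto (fun N : ℕ =>
      1 - (∏ i, ((((N:ℤ) - |u i|).toNat : ℝ)))/(N:ℝ)^k) atTop (𝓝 0) := by
    have := (tendsto_const_nhds (x := (1:ℝ)) (f := atTop (α := ℕ))).sub (prod_ratio_tendsto u)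
    simpa using this
  apply squeeze_zero_norm' ?_ hg
  filter_upwards [eventually_ge_atTop 1] with N hN
  have hd : (0:ℝ) < (N:ℝ)^k := by
    have h0 : (0:ℕ) < N := hN
    have : (0:ℝ) < (N:ℝ) := by exact_mod_cast h0
    positivity
  set B := box (aa E N) N with hBdef
  set B' := box (aa E N - u) N with hB'def
  set p := fun n => shift n (xind E) ∈ S with hpdef
  have hBcard : B.card = N ^ k := card_box _ _
  have hB'card : B'.card = N ^ k := card_box _ _
  have hI : (B ∩ B').card = ∏ i, ((N:ℤ) - |u i|).toNat := card_box_inter _ _ _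
  have hIle : (B ∩ B').card ≤ N ^ k := by
    rw [← hBcard]
    exact Finset.card_le_card Finset.inter_subset_left
  have h1 : (B.filter p).card ≤ (B'.filter p).card + (N ^ k - (B ∩ B').card) := by
    have h := filter_card_diff_le B B' p
    rwa [hBcard] at h
  have h2 : (B'.filter p).card ≤ (B.filter p).card + (N ^ k - (B ∩ B').card) := by
    have h := filter_card_diff_le B' B p
    rwa [hB'card, Finset.inter_comm] at h
  have hc1 : ((B.filter p).card : ℝ)
      ≤ ((B'.filter p).card : ℝ) + ((N:ℝ)^k - ((B ∩ B').card : ℝ)) := by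
    have h := (Nat.cast_le (α := ℝ)).2 h1
    push_cast [Nat.cast_sub hIle] at h
    linarith
  have hc2 : ((B'.filter p).card : ℝ)
      ≤ ((B.filter p).card : ℝ) + ((N:ℝ)^k - ((B ∩ B').card : ℝ)) := by
    have h := (Nat.cast_le (α := ℝ)).2 h2
    push_cast [Nat.cast_sub hIle] at h
    linarith
  have e1 : nu E (shift u '' S) N = ((B'.filter p).card : ℝ) / (N:ℝ)^k := by
    unfold nu
    rw [card_image_filter]
  have e2 : nu E S N = ((B.filter p).card : ℝ) / (N:ℝ)^k := rfl
  have hIprod : ((B ∩ B').card : ℝ) = ∏ i, (((N:ℤ) - |u i|).toNat : ℝ) := by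
    rw [hI]
    push_cast
    rfl
  rw [e1, e2, div_sub_div_same, Real.norm_eq_abs, abs_div, abs_of_pos hd, ← hIprod]
  rw [show (1:ℝ) - ((B ∩ B').card : ℝ)/(N:ℝ)^k = ((N:ℝ)^k - ((B ∩ B').card : ℝ))/(N:ℝ)^k by
    rw [sub_div, div_self (ne_of_gt hd)]]
  apply div_le_div_of_nonneg_right (hc := le_of_lt hd)
  rw [abs_le]
  constructor <;> linarith

theorem lfn_image (E : Set (Fin k → ℤ)) (u : Fin k → ℤ) (S : Set (XS k)) :
    lfn E (shift u '' S) = lfn E S := by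
  have h0 := (nu_image_sub_tendsto E u S).mono_left (UF_le_atTop E)
  have h1 : Tendsto (fun N => nu E S N + (nu E (shift u '' S) N - nu E S N)) (UF E)
      (𝓝 (lfn E S + 0)) := (hl E S).add h0
  have h2 : Tendsto (fun N => nu E (shift u '' S) N) (UF E) (𝓝 (lfn E S)) := by
    simpa using h1.congr fun N => by ring
  exact tendsto_nhds_unique (hl E (shift u '' S)) h2

end FCorr
end Chunk5

section Chunk6
namespace FCorr

variable {k : ℕ}

/-- The content on the Cantor-like space given by ultrafilter limits of empirical averages. -/
noncomputable def cont (E : Set (Fin k → ℤ)) : Content (XS k) where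
  toFun K := (lfn E ↑K).toNNReal
  mono' K₁ K₂ h := Real.toNNReal_le_toNNReal (lfn_mono E h)
  sup_disjoint' K₁ K₂ hd _ _ := by
    show (lfn E ↑(K₁ ⊔ K₂)).toNNReal = (lfn E ↑K₁).toNNReal + (lfn E ↑K₂).toNNReal
    have hc : ((K₁ ⊔ K₂ : TopologicalSpace.Compacts (XS k)) : Set (XS k)) = ↑K₁ ∪ ↑K₂ := rfl
    rw [hc, lfn_union_disjoint E hd, Real.toNNReal_add (lfn_nonneg E _) (lfn_nonneg E _)]
  sup_le' K₁ K₂ := by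
    show (lfn E ↑(K₁ ⊔ K₂)).toNNReal ≤ (lfn E ↑K₁).toNNReal + (lfn E ↑K₂).toNNReal
    have hc : ((K₁ ⊔ K₂ : TopologicalSpace.Compacts (XS k)) : Set (XS k)) = ↑K₁ ∪ ↑K₂ := rfl
    rw [hc, ← Real.toNNReal_add (lfn_nonneg E _) (lfn_nonneg E _)]
    exact Real.toNNReal_le_toNNReal (lfn_union_le E _ _)

theorem measure_clopen (E : Set (Fin k → ℤ)) {S : Set (XS k)} (hS : IsCompact S)
    (hS' : IsOpen S) :
    (cont E).measure S = ((lfn E S).toNNReal : ENNReal) := by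
  rw [Content.measure_apply _ hS'.measurableSet]
  have h1 : (cont E).outerMeasure S = (cont E).innerContent ⟨S, hS'⟩ :=
    Content.outerMeasure_opens _ ⟨S, hS'⟩
  rw [h1, (cont E).innerContent_of_isCompact hS hS']
  rfl

theorem prob (E : Set (Fin k → ℤ)) : IsProbabilityMeasure (cont E).measure := by
  constructor
  rw [measure_clopen E isCompact_univ isOpen_univ, lfn_univ, Real.toNNReal_one, ENNReal.coe_one]

theorem preserve (E : Set (Fin k → ℤ)) (u : Fin k → ℤ) :
    MeasurePreserving (shift u) (cont E).measure (cont E).measure := by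
  refine ⟨(continuous_shift u).measurable, ?_⟩
  apply MeasureTheory.Measure.ext fun s hs => ?_
  rw [MeasureTheory.Measure.map_apply (continuous_shift u).measurable hs]
  rw [Content.measure_apply _ ((continuous_shift u).measurable hs), Content.measure_apply _ hs]
  have hmap : ∀ ⦃K : TopologicalSpace.Compacts (XS k)⦄,
      cont E (K.map (shiftHomeo u) (shiftHomeo u).continuous) = cont E K := by
    intro K
    have hc : ((K.map (shiftHomeo u) (shiftHomeo u).continuous :
        TopologicalSpace.Compacts (XS k)) : Set (XS k)) = shift u '' ↑K := rfl
    show ((lfn E _).toNNReal : ENNReal) = ((lfn E ↑K).toNNReal : ENNReal)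
    rw [hc, lfn_image E u ↑K]
  exact (cont E).outerMeasure_preimage (shiftHomeo u) hmap s

theorem Abase_open : IsOpen (Abase k) := by
  have : Abase k = (fun x : XS k => x 0) ⁻¹' {true} := rfl
  rw [this]
  exact (continuous_apply 0).isOpen_preimage _ (isOpen_discrete _)

theorem Abase_closed : IsClosed (Abase k) := by
  have : Abase k = (fun x : XS k => x 0) ⁻¹' {true} := rfl
  rw [this]
  exact IsClosed.preimage (continuous_apply 0) (isClosed_discrete _)

end FCorr
end Chunk6

/-- Furstenberg's correspondence principle for `ℤᵏ`.  The `k` commuting invertible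
measure preserving transformations `T₁, …, T_k` are packaged as a measure preserving
`ℤᵏ`-action `T`, so that `∏ᵢ Tᵢ^{-dᵢ} A = (T d)⁻¹' A`. -/
theorem stmt19 (k : ℕ) (hk : 0 < k) (E : Set (Fin k → ℤ)) :
    ∃ (X : Type) (_ : MeasurableSpace X) (μ : Measure X)
      (T : (Fin k → ℤ) → X → X) (A : Set X),
      IsProbabilityMeasure μ ∧
      T 0 = id ∧ (∀ u v : Fin k → ℤ, T (u + v) = T u ∘ T v) ∧
      (∀ u : Fin k → ℤ, MeasurePreserving (T u) μ μ) ∧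
      MeasurableSet A ∧ (μ A).toReal = upperBanachDensityZ E ∧
      ∀ (m : ℕ) (d : Fin m → (Fin k → ℤ)),
        upperBanachDensityZ (E ∩ ⋂ j : Fin m, {x | x + d j ∈ E}) ≥
          (μ (A ∩ ⋂ j : Fin m, T (d j) ⁻¹' A)).toReal := by
  refine ⟨FCorr.XS k, inferInstance, (FCorr.cont E).measure, FCorr.shift, FCorr.Abase k,
    FCorr.prob E, FCorr.shift_zero, FCorr.shift_add, FCorr.preserve E,
    FCorr.Abase_open.measurableSet, ?_, ?_⟩
  · rw [FCorr.measure_clopen E FCorr.Abase_closed.isCompact FCorr.Abase_open,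
      ENNReal.coe_toReal, Real.coe_toNNReal _ (FCorr.lfn_nonneg E _), FCorr.lfn_Abase]
    exact (FCorr.ubd_eq E).symm
  · intro m d
    set C := FCorr.Abase k ∩ ⋂ j : Fin m, FCorr.shift (d j) ⁻¹' FCorr.Abase k with hC
    have hCopen : IsOpen C := FCorr.Abase_open.inter
      (isOpen_iInter_of_finite fun j =>
        FCorr.Abase_open.preimage (FCorr.continuous_shift (d j)))
    have hCclosed : IsClosed C := FCorr.Abase_closed.inter
      (isClosed_iInter fun j => FCorr.Abase_closed.preimage (FCorr.continuous_shift (d j)))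
    rw [FCorr.measure_clopen E hCclosed.isCompact hCopen, ENNReal.coe_toReal,
      Real.coe_toNNReal _ (FCorr.lfn_nonneg E _), FCorr.ubd_eq]
    have key : ∀ n : Fin k → ℤ, FCorr.shift n (FCorr.xind E) ∈ C ↔
        n ∈ (E ∩ ⋂ j : Fin m, {x | x + d j ∈ E}) := by
      intro n
      rw [hC]
      simp only [Set.mem_inter_iff, Set.mem_iInter, Set.mem_preimage, Set.mem_setOf_eq]
      rw [FCorr.mem_Abase_iff]
      apply and_congr Iff.rfl
      apply forall_congr'
      intro j
      rw [FCorr.shift_apply_shift, FCorr.mem_Abase_iff, add_comm]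
    exact FCorr.lfn_le_dstar E _ C key
end
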